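/- arXiv:1404.6821 — 9 statements merged into one kernel-verified Lean document; each statement's English description precedes it below -/
import Mathlib

section
/- The theta graph Θ_{3,3,3} is not (4:2)-choosable; that is, there exists a list assignment L on Θ_{3,3,3} with |L(v)| = 4 for every vertex v such that Θ_{3,3,3} has no 2-tuple L-colouring. -/
/-- `f` is a `b`-tuple `L`-colouring of `G`: each vertex gets a `b`-set of colours
from its list, and adjacent vertices get disjoint sets. -/
def IsTupleListColoring {V : Type*} (G : SimpleGraph V) (L : V → Finset ℕ) (b : ℕ)
    (f : V → Finset ℕ) : Prop :=
  (∀ v, f v ⊆ L v) ∧ (∀ v, (f v).card = b) ∧ ∀ ⦃u v⦄, G.Adj u v → Disjoint (f u) (f v)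

/-- `G` is `(L:b)`-colourable. -/
def ListColorable {V : Type*} (G : SimpleGraph V) (L : V → Finset ℕ) (b : ℕ) : Prop :=
  ∃ f, IsTupleListColoring G L b f

/-- `G` is `(a:b)`-choosable. -/
def Choosable {V : Type*} (G : SimpleGraph V) (a b : ℕ) : Prop :=
  ∀ L : V → Finset ℕ, (∀ v, (L v).card = a) → ListColorable G L b

/-- `G` is the theta graph `Θ_{r,s,t}`: two vertices `u ≠ v` joined by three internally
vertex-disjoint paths of `r`, `s`, `t` edges, which together cover all vertices and edges. -/
def IsThetaGraph {V : Type*} (G : SimpleGraph V) (u v : V) (r s t : ℕ) : Prop :=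
  u ≠ v ∧ ∃ (P Q R : G.Walk u v),
    P.IsPath ∧ Q.IsPath ∧ R.IsPath ∧
    P.length = r ∧ Q.length = s ∧ R.length = t ∧
    (∀ x, x ∈ P.support → x ∈ Q.support → x = u ∨ x = v) ∧
    (∀ x, x ∈ P.support → x ∈ R.support → x = u ∨ x = v) ∧
    (∀ x, x ∈ Q.support → x ∈ R.support → x = u ∨ x = v) ∧
    (∀ x : V, x ∈ P.support ∨ x ∈ Q.support ∨ x ∈ R.support) ∧
    (∀ e ∈ G.edgeSet, e ∈ P.edges ∨ e ∈ Q.edges ∨ e ∈ R.edges)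

def pathOK (La Lb S T : Finset ℕ) : Prop :=
  ∃ A ∈ La.powersetCard 2, ∃ B ∈ Lb.powersetCard 2,
    Disjoint S A ∧ Disjoint A B ∧ Disjoint B T

instance : ∀ La Lb S T, Decidable (pathOK La Lb S T) := fun _ _ _ _ =>
  inferInstanceAs (Decidable (∃ _ ∈ _, _))

lemma key : ∀ S ∈ ({0,1,2,3} : Finset ℕ).powersetCard 2,
    ∀ T ∈ ({0,1,2,3} : Finset ℕ).powersetCard 2,
    ¬ pathOK {0,1,2,4} {0,1,3,4} S T ∨
    ¬ pathOK {0,1,3,4} {0,2,3,4} S T ∨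
    ¬ pathOK {0,2,3,4} {0,1,2,4} S T := by decide

lemma walk_len3 {V : Type} {G : SimpleGraph V} {u v : V} (P : G.Walk u v)
    (h : P.length = 3) :
    ∃ (a b : V) (h1 : G.Adj u a) (h2 : G.Adj a b) (h3 : G.Adj b v),
      P = SimpleGraph.Walk.cons h1 (SimpleGraph.Walk.cons h2
        (SimpleGraph.Walk.cons h3 SimpleGraph.Walk.nil)) := by
  cases P with
  | nil => simp at h
  | cons h1 P1 =>
    cases P1 with
    | nil => simp at h
    | cons h2 P2 =>
      cases P2 with
      | nil => simp at h
      | cons h3 P3 =>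
        cases P3 with
        | nil => exact ⟨_, _, h1, h2, h3, rfl⟩
        | cons h4 P4 => simp [SimpleGraph.Walk.length_cons] at h

/-- `Θ_{3,3,3}` is not `(4:2)`-choosable: it admits a list assignment with lists of
size 4 for which there is no 2-tuple list colouring. -/
theorem theta333_not_choosable (V : Type) (G : SimpleGraph V) (u v : V)
    (hG : IsThetaGraph G u v 3 3 3) :
    ∃ L : V → Finset ℕ, (∀ x, (L x).card = 4) ∧ ¬ ListColorable G L 2 := by
  classical
  obtain ⟨huv, P, Q, R, hP, hQ, hR, hPl, hQl, hRl, hPQ, hPR, hQR, -, -⟩ := hG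
  obtain ⟨a1, a2, pa1, pa2, pa3, rfl⟩ := walk_len3 P hPl
  obtain ⟨b1, b2, qb1, qb2, qb3, rfl⟩ := walk_len3 Q hQl
  obtain ⟨c1, c2, rc1, rc2, rc3, rfl⟩ := walk_len3 R hRl
  have hPn := hP.support_nodup
  have hQn := hQ.support_nodup
  have hRn := hR.support_nodup
  simp [List.nodup_cons, -ne_eq] at hPn hQn hRn
  obtain ⟨⟨hua1, hua2, huv'⟩, ⟨ha12, ha1v⟩, ha2v⟩ := hPn
  obtain ⟨⟨hub1, hub2, -⟩, ⟨hb12, hb1v⟩, hb2v⟩ := hQn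
  obtain ⟨⟨huc1, huc2, -⟩, ⟨hc12, hc1v⟩, hc2v⟩ := hRn
  -- cross-path distinctness
  have cross : ∀ x, x ≠ u → x ≠ v →
      (x ∈ (SimpleGraph.Walk.cons pa1 (SimpleGraph.Walk.cons pa2
        (SimpleGraph.Walk.cons pa3 SimpleGraph.Walk.nil))).support →
       x ∈ (SimpleGraph.Walk.cons qb1 (SimpleGraph.Walk.cons qb2
        (SimpleGraph.Walk.cons qb3 SimpleGraph.Walk.nil))).support → False) := by
    intro x hxu hxv h1 h2
    rcases hPQ x h1 h2 with h | h <;> [exact hxu h; exact hxv h]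
  have crossR : ∀ x, x ≠ u → x ≠ v →
      (x ∈ (SimpleGraph.Walk.cons pa1 (SimpleGraph.Walk.cons pa2
        (SimpleGraph.Walk.cons pa3 SimpleGraph.Walk.nil))).support →
       x ∈ (SimpleGraph.Walk.cons rc1 (SimpleGraph.Walk.cons rc2
        (SimpleGraph.Walk.cons rc3 SimpleGraph.Walk.nil))).support → False) := by
    intro x hxu hxv h1 h2
    rcases hPR x h1 h2 with h | h <;> [exact hxu h; exact hxv h]
  have crossQR : ∀ x, x ≠ u → x ≠ v →
      (x ∈ (SimpleGraph.Walk.cons qb1 (SimpleGraph.Walk.cons qb2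
        (SimpleGraph.Walk.cons qb3 SimpleGraph.Walk.nil))).support →
       x ∈ (SimpleGraph.Walk.cons rc1 (SimpleGraph.Walk.cons rc2
        (SimpleGraph.Walk.cons rc3 SimpleGraph.Walk.nil))).support → False) := by
    intro x hxu hxv h1 h2
    rcases hQR x h1 h2 with h | h <;> [exact hxu h; exact hxv h]
  have ha1b1 : a1 ≠ b1 := fun h => cross a1 (Ne.symm hua1) ha1v (by simp) (by rw [h]; simp)
  have ha1b2 : a1 ≠ b2 := fun h => cross a1 (Ne.symm hua1) ha1v (by simp) (by rw [h]; simp)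
  have ha2b1 : a2 ≠ b1 := fun h => cross a2 (Ne.symm hua2) ha2v (by simp) (by rw [h]; simp)
  have ha2b2 : a2 ≠ b2 := fun h => cross a2 (Ne.symm hua2) ha2v (by simp) (by rw [h]; simp)
  have ha1c1 : a1 ≠ c1 := fun h => crossR a1 (Ne.symm hua1) ha1v (by simp) (by rw [h]; simp)
  have ha1c2 : a1 ≠ c2 := fun h => crossR a1 (Ne.symm hua1) ha1v (by simp) (by rw [h]; simp)
  have ha2c1 : a2 ≠ c1 := fun h => crossR a2 (Ne.symm hua2) ha2v (by simp) (by rw [h]; simp)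
  have ha2c2 : a2 ≠ c2 := fun h => crossR a2 (Ne.symm hua2) ha2v (by simp) (by rw [h]; simp)
  have hb1c1 : b1 ≠ c1 := fun h => crossQR b1 (Ne.symm hub1) hb1v (by simp) (by rw [h]; simp)
  have hb1c2 : b1 ≠ c2 := fun h => crossQR b1 (Ne.symm hub1) hb1v (by simp) (by rw [h]; simp)
  have hb2c1 : b2 ≠ c1 := fun h => crossQR b2 (Ne.symm hub2) hb2v (by simp) (by rw [h]; simp)
  have hb2c2 : b2 ≠ c2 := fun h => crossQR b2 (Ne.symm hub2) hb2v (by simp) (by rw [h]; simp)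
  set L : V → Finset ℕ := fun x =>
    if x = a1 then {0,1,2,4} else if x = a2 then {0,1,3,4}
    else if x = b1 then {0,1,3,4} else if x = b2 then {0,2,3,4}
    else if x = c1 then {0,2,3,4} else if x = c2 then {0,1,2,4}
    else {0,1,2,3} with hLdef
  have La1 : L a1 = {0,1,2,4} := by simp [hLdef]
  have La2 : L a2 = {0,1,3,4} := by simp [hLdef, Ne.symm ha12]
  have Lb1 : L b1 = {0,1,3,4} := by simp [hLdef, Ne.symm ha1b1, Ne.symm ha2b1]
  have Lb2 : L b2 = {0,2,3,4} := by
    simp [hLdef, Ne.symm ha1b2, Ne.symm ha2b2, Ne.symm hb12]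
  have Lc1 : L c1 = {0,2,3,4} := by
    simp [hLdef, Ne.symm ha1c1, Ne.symm ha2c1, Ne.symm hb1c1, Ne.symm hb2c1]
  have Lc2 : L c2 = {0,1,2,4} := by
    simp [hLdef, Ne.symm ha1c2, Ne.symm ha2c2, Ne.symm hb1c2, Ne.symm hb2c2, Ne.symm hc12]
  have Lu : L u = {0,1,2,3} := by simp [hLdef, hua1, hua2, hub1, hub2, huc1, huc2]
  have Lv : L v = {0,1,2,3} := by
    simp [hLdef, Ne.symm ha1v, Ne.symm ha2v, Ne.symm hb1v, Ne.symm hb2v,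
      Ne.symm hc1v, Ne.symm hc2v]
  refine ⟨L, fun x => ?_, ?_⟩
  · simp only [hLdef]; split_ifs <;> decide
  · rintro ⟨f, hsub, hcard, hadj⟩
    have hmem : ∀ x (s : Finset ℕ), L x = s → f x ∈ s.powersetCard 2 := by
      intro x s hs
      exact Finset.mem_powersetCard.mpr ⟨hs ▸ hsub x, hcard x⟩
    rcases key (f u) (hmem u _ Lu) (f v) (hmem v _ Lv) with h | h | h
    · exact h ⟨f a1, hmem a1 _ La1, f a2, hmem a2 _ La2,
        hadj pa1, hadj pa2, hadj pa3⟩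
    · exact h ⟨f b1, hmem b1 _ Lb1, f b2, hmem b2 _ Lb2,
        hadj qb1, hadj qb2, hadj qb3⟩
    · exact h ⟨f c1, hmem c1 _ Lc1, f c2, hmem c2 _ Lc2,
        hadj rc1, hadj rc2, hadj rc3⟩
end

section
/- For all integers r, s, t ≥ 1, the theta graph Θ_{2r+1,2s+1,2t+1} is not (4:2)-choosable. -/
open SimpleGraph

lemma my_getVert_mem_support {V : Type*} {G : SimpleGraph V} {u v : V} (p : G.Walk u v)
    {i : ℕ} (hi : i ≤ p.length) : p.getVert i ∈ p.support :=
  Walk.mem_support_iff_exists_getVert.mpr ⟨i, rfl, hi⟩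

lemma my_getVert_inj {V : Type*} {G : SimpleGraph V} {u v : V} {p : G.Walk u v}
    (hp : p.IsPath) {i j : ℕ} (hi : i ≤ p.length) (hj : j ≤ p.length)
    (h : p.getVert i = p.getVert j) : i = j := by
  induction p generalizing i j with
  | nil => simp only [Walk.length_nil, Nat.le_zero] at hi hj; omega
  | cons hadj q ih =>
    rw [Walk.cons_isPath_iff] at hp
    simp only [Walk.length_cons] at hi hj
    cases i with
    | zero =>
      cases j with
      | zero => rfl
      | succ j =>
        exfalso
        apply hp.2
        have hmem : q.getVert j ∈ q.support := my_getVert_mem_support q (by omega)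
        have : (Walk.cons hadj q).getVert 0 = _root_.id _ := rfl
        rw [Walk.getVert_zero] at h
        rw [Walk.getVert_cons_succ] at h
        rwa [h]
    | succ i =>
      cases j with
      | zero =>
        exfalso
        apply hp.2
        have hmem : q.getVert i ∈ q.support := my_getVert_mem_support q (by omega)
        rw [Walk.getVert_zero, Walk.getVert_cons_succ] at h
        rwa [← h]
      | succ j =>
        rw [Walk.getVert_cons_succ, Walk.getVert_cons_succ] at h
        have := ih hp.1 (by omega) (by omega) h
        omega

lemma two_sub_four {A S T : Finset ℕ} (hA : A.card = 4) (hS : S ⊆ A) (hT : T ⊆ A)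
    (hSc : S.card = 2) (hTc : T.card = 2) (hd : Disjoint S T) : T = A \ S := by
  apply Finset.eq_of_subset_of_card_le (Finset.subset_sdiff.mpr ⟨hT, hd.symm⟩)
  rw [Finset.card_sdiff_of_subset hS, hA, hSc, hTc]

lemma path_transfer {V : Type*} {G : SimpleGraph V} {u v : V} (W : G.Walk u v)
    (m : ℕ) (hm : 1 ≤ m) (hlen : W.length = 2 * m + 1)
    (f L : V → Finset ℕ)
    (hsub : ∀ x, f x ⊆ L x) (hcard : ∀ x, (f x).card = 2)
    (hadj : ∀ ⦃a b⦄, G.Adj a b → Disjoint (f a) (f b))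
    (A B : Finset ℕ) (hA : A.card = 4)
    (hLA : ∀ i, 1 ≤ i → i ≤ 2 * m - 1 → L (W.getVert i) = A)
    (hLB : L (W.getVert (2 * m)) = B) :
    ∃ S T : Finset ℕ, S ⊆ A ∧ S.card = 2 ∧ T ⊆ B ∧ T.card = 2 ∧
      Disjoint (f u) S ∧ Disjoint S T ∧ Disjoint T (f v) := by
  have hsubA : ∀ i, 1 ≤ i → i ≤ 2 * m - 1 → f (W.getVert i) ⊆ A := by
    intro i h1 h2
    have := hsub (W.getVert i)
    rwa [hLA i h1 h2] at this
  have key : ∀ k, 2 * k + 1 ≤ 2 * m - 1 → f (W.getVert (2 * k + 1)) = f (W.getVert 1) := by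
    intro k
    induction k with
    | zero => intro _; norm_num
    | succ k ih =>
      intro hk
      have hk' : 2 * k + 1 ≤ 2 * m - 1 := by omega
      have h1 : f (W.getVert (2 * k + 1)) ⊆ A := hsubA _ (by omega) hk'
      have h2 : f (W.getVert (2 * k + 2)) ⊆ A := hsubA _ (by omega) (by omega)
      have h3 : f (W.getVert (2 * k + 3)) ⊆ A := hsubA _ (by omega) (by omega)
      have d1 : Disjoint (f (W.getVert (2 * k + 1))) (f (W.getVert (2 * k + 2))) := by
        have := hadj (W.adj_getVert_succ (i := 2 * k + 1) (by omega))
        simpa [show 2 * k + 1 + 1 = 2 * k + 2 from by ring] using this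
      have d2 : Disjoint (f (W.getVert (2 * k + 2))) (f (W.getVert (2 * k + 3))) := by
        have := hadj (W.adj_getVert_succ (i := 2 * k + 2) (by omega))
        simpa [show 2 * k + 2 + 1 = 2 * k + 3 from by ring] using this
      have e2 : f (W.getVert (2 * k + 2)) = A \ f (W.getVert (2 * k + 1)) :=
        two_sub_four hA h1 h2 (hcard _) (hcard _) d1
      have e3 : f (W.getVert (2 * k + 3)) = A \ f (W.getVert (2 * k + 2)) :=
        two_sub_four hA h2 h3 (hcard _) (hcard _) d2
      rw [show 2 * (k + 1) + 1 = 2 * k + 3 from by ring, e3, e2,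
        Finset.sdiff_sdiff_eq_self h1, ih hk']
  refine ⟨f (W.getVert 1), f (W.getVert (2 * m)), hsubA 1 le_rfl (by omega), hcard _,
    ?_, hcard _, ?_, ?_, ?_⟩
  · have := hsub (W.getVert (2 * m)); rwa [hLB] at this
  · have := hadj (W.adj_getVert_succ (i := 0) (by omega))
    simpa [Walk.getVert_zero] using this
  · have hS := key (m - 1) (by omega)
    rw [show 2 * (m - 1) + 1 = 2 * m - 1 from by omega] at hS
    have d := hadj (W.adj_getVert_succ (i := 2 * m - 1) (by omega))
    rw [show 2 * m - 1 + 1 = 2 * m from by omega, hS] at d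
    exact d
  · have d := hadj (W.adj_getVert_succ (i := 2 * m) (by omega))
    rwa [show 2 * m + 1 = W.length from hlen.symm, W.getVert_length] at d

lemma theta_lists_bad :
    ∀ su ∈ ({0,1,2,3} : Finset ℕ).powersetCard 2, ∀ sv ∈ ({0,1,2,3} : Finset ℕ).powersetCard 2,
      ¬ ((∃ a ∈ ({0,1,2,4} : Finset ℕ).powersetCard 2, ∃ b ∈ ({0,1,3,4} : Finset ℕ).powersetCard 2,
            Disjoint su a ∧ Disjoint a b ∧ Disjoint b sv) ∧
         (∃ a ∈ ({0,1,3,4} : Finset ℕ).powersetCard 2, ∃ b ∈ ({0,2,3,4} : Finset ℕ).powersetCard 2,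
            Disjoint su a ∧ Disjoint a b ∧ Disjoint b sv) ∧
         (∃ a ∈ ({0,2,3,4} : Finset ℕ).powersetCard 2, ∃ b ∈ ({0,1,2,4} : Finset ℕ).powersetCard 2,
            Disjoint su a ∧ Disjoint a b ∧ Disjoint b sv)) := by decide

/-- For all `r, s, t ≥ 1`, the theta graph `Θ_{2r+1,2s+1,2t+1}` is not `(4:2)`-choosable. -/
theorem theta_odd_not_choosable (r s t : ℕ) (hr : 1 ≤ r) (hs : 1 ≤ s) (ht : 1 ≤ t)
    (V : Type) (G : SimpleGraph V) (u v : V)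
    (hG : IsThetaGraph G u v (2 * r + 1) (2 * s + 1) (2 * t + 1)) :
    ¬ Choosable G 4 2 := by
  classical
  obtain ⟨huv, P, Q, R, hP, hQ, hR, hPl, hQl, hRl, hPQ, hPR, hQR, hcov, -⟩ := hG
  intro hCh
  set L : V → Finset ℕ := fun x =>
    if x = u then ({0,1,2,3} : Finset ℕ)
    else if x = v then ({0,1,2,3} : Finset ℕ)
    else if x ∈ P.support then
      (if x = P.getVert (2 * r) then ({0,1,3,4} : Finset ℕ) else ({0,1,2,4} : Finset ℕ))
    else if x ∈ Q.support then
      (if x = Q.getVert (2 * s) then ({0,2,3,4} : Finset ℕ) else ({0,1,3,4} : Finset ℕ))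
    else
      (if x = R.getVert (2 * t) then ({0,1,2,4} : Finset ℕ) else ({0,2,3,4} : Finset ℕ))
    with hLdef
  have hcard4 : ∀ x, (L x).card = 4 := by
    intro x
    simp only [hLdef]
    split_ifs <;> decide
  obtain ⟨f, hfL, hfc, hfadj⟩ := hCh L hcard4
  -- generic facts about P
  have hPne_u : ∀ i, 1 ≤ i → i ≤ 2 * r → P.getVert i ≠ u := by
    intro i h1 h2 hx
    have : i = 0 := my_getVert_inj hP (by omega) (by omega)
      (by rw [hx, P.getVert_zero])
    omega
  have hPne_v : ∀ i, 1 ≤ i → i ≤ 2 * r → P.getVert i ≠ v := by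
    intro i h1 h2 hx
    have : i = P.length := my_getVert_inj hP (by omega) le_rfl
      (by rw [hx, P.getVert_length])
    omega
  have hQne_u : ∀ i, 1 ≤ i → i ≤ 2 * s → Q.getVert i ≠ u := by
    intro i h1 h2 hx
    have : i = 0 := my_getVert_inj hQ (by omega) (by omega)
      (by rw [hx, Q.getVert_zero])
    omega
  have hQne_v : ∀ i, 1 ≤ i → i ≤ 2 * s → Q.getVert i ≠ v := by
    intro i h1 h2 hx
    have : i = Q.length := my_getVert_inj hQ (by omega) le_rfl
      (by rw [hx, Q.getVert_length])
    omega
  have hRne_u : ∀ i, 1 ≤ i → i ≤ 2 * t → R.getVert i ≠ u := by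
    intro i h1 h2 hx
    have : i = 0 := my_getVert_inj hR (by omega) (by omega)
      (by rw [hx, R.getVert_zero])
    omega
  have hRne_v : ∀ i, 1 ≤ i → i ≤ 2 * t → R.getVert i ≠ v := by
    intro i h1 h2 hx
    have : i = R.length := my_getVert_inj hR (by omega) le_rfl
      (by rw [hx, R.getVert_length])
    omega
  have hQnotP : ∀ i, 1 ≤ i → i ≤ 2 * s → Q.getVert i ∉ P.support := by
    intro i h1 h2 hmem
    rcases hPQ _ hmem (my_getVert_mem_support Q (by omega)) with h | h
    exacts [hQne_u i h1 h2 h, hQne_v i h1 h2 h]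
  have hRnotP : ∀ i, 1 ≤ i → i ≤ 2 * t → R.getVert i ∉ P.support := by
    intro i h1 h2 hmem
    rcases hPR _ hmem (my_getVert_mem_support R (by omega)) with h | h
    exacts [hRne_u i h1 h2 h, hRne_v i h1 h2 h]
  have hRnotQ : ∀ i, 1 ≤ i → i ≤ 2 * t → R.getVert i ∉ Q.support := by
    intro i h1 h2 hmem
    rcases hQR _ hmem (my_getVert_mem_support R (by omega)) with h | h
    exacts [hRne_u i h1 h2 h, hRne_v i h1 h2 h]
  -- list values along P
  have hLP_A : ∀ i, 1 ≤ i → i ≤ 2 * r - 1 → L (P.getVert i) = ({0,1,2,4} : Finset ℕ) := by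
    intro i h1 h2
    have hne : P.getVert i ≠ P.getVert (2 * r) := by
      intro hx
      have : i = 2 * r := my_getVert_inj hP (by omega) (by omega) hx
      omega
    simp only [hLdef]
    rw [if_neg (hPne_u i h1 (by omega)), if_neg (hPne_v i h1 (by omega)),
      if_pos (my_getVert_mem_support P (by omega)), if_neg hne]
  have hLP_B : L (P.getVert (2 * r)) = ({0,1,3,4} : Finset ℕ) := by
    simp only [hLdef]
    rw [if_neg (hPne_u (2 * r) (by omega) le_rfl), if_neg (hPne_v (2 * r) (by omega) le_rfl),
      if_pos (my_getVert_mem_support P (by omega))]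
    simp
  have hLQ_A : ∀ i, 1 ≤ i → i ≤ 2 * s - 1 → L (Q.getVert i) = ({0,1,3,4} : Finset ℕ) := by
    intro i h1 h2
    have hne : Q.getVert i ≠ Q.getVert (2 * s) := by
      intro hx
      have : i = 2 * s := my_getVert_inj hQ (by omega) (by omega) hx
      omega
    simp only [hLdef]
    rw [if_neg (hQne_u i h1 (by omega)), if_neg (hQne_v i h1 (by omega)),
      if_neg (hQnotP i h1 (by omega)), if_pos (my_getVert_mem_support Q (by omega)), if_neg hne]
  have hLQ_B : L (Q.getVert (2 * s)) = ({0,2,3,4} : Finset ℕ) := by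
    simp only [hLdef]
    rw [if_neg (hQne_u (2 * s) (by omega) le_rfl), if_neg (hQne_v (2 * s) (by omega) le_rfl),
      if_neg (hQnotP (2 * s) (by omega) le_rfl),
      if_pos (my_getVert_mem_support Q (by omega))]
    simp
  have hLR_A : ∀ i, 1 ≤ i → i ≤ 2 * t - 1 → L (R.getVert i) = ({0,2,3,4} : Finset ℕ) := by
    intro i h1 h2
    have hne : R.getVert i ≠ R.getVert (2 * t) := by
      intro hx
      have : i = 2 * t := my_getVert_inj hR (by omega) (by omega) hx
      omega
    simp only [hLdef]
    rw [if_neg (hRne_u i h1 (by omega)), if_neg (hRne_v i h1 (by omega)),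
      if_neg (hRnotP i h1 (by omega)), if_neg (hRnotQ i h1 (by omega)), if_neg hne]
  have hLR_B : L (R.getVert (2 * t)) = ({0,1,2,4} : Finset ℕ) := by
    simp only [hLdef]
    rw [if_neg (hRne_u (2 * t) (by omega) le_rfl), if_neg (hRne_v (2 * t) (by omega) le_rfl),
      if_neg (hRnotP (2 * t) (by omega) le_rfl), if_neg (hRnotQ (2 * t) (by omega) le_rfl)]
    simp
  obtain ⟨Sp, Tp, hSpA, hSpc, hTpB, hTpc, hd1p, hd2p, hd3p⟩ :=
    path_transfer P r hr hPl f L hfL hfc hfadj _ _ (by decide) hLP_A hLP_B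
  obtain ⟨Sq, Tq, hSqA, hSqc, hTqB, hTqc, hd1q, hd2q, hd3q⟩ :=
    path_transfer Q s hs hQl f L hfL hfc hfadj _ _ (by decide) hLQ_A hLQ_B
  obtain ⟨Sr, Tr, hSrA, hSrc, hTrB, hTrc, hd1r, hd2r, hd3r⟩ :=
    path_transfer R t ht hRl f L hfL hfc hfadj _ _ (by decide) hLR_A hLR_B
  have hLu : L u = ({0,1,2,3} : Finset ℕ) := by simp only [hLdef]; simp
  have hLv : L v = ({0,1,2,3} : Finset ℕ) := by
    simp only [hLdef]; rw [if_neg (Ne.symm huv)]; simp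
  have hu2 : f u ∈ ({0,1,2,3} : Finset ℕ).powersetCard 2 :=
    Finset.mem_powersetCard.mpr ⟨hLu ▸ hfL u, hfc u⟩
  have hv2 : f v ∈ ({0,1,2,3} : Finset ℕ).powersetCard 2 :=
    Finset.mem_powersetCard.mpr ⟨hLv ▸ hfL v, hfc v⟩
  exact theta_lists_bad (f u) hu2 (f v) hv2
    ⟨⟨Sp, Finset.mem_powersetCard.mpr ⟨hSpA, hSpc⟩, Tp,
        Finset.mem_powersetCard.mpr ⟨hTpB, hTpc⟩, hd1p, hd2p, hd3p⟩,
     ⟨Sq, Finset.mem_powersetCard.mpr ⟨hSqA, hSqc⟩, Tq,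
        Finset.mem_powersetCard.mpr ⟨hTqB, hTqc⟩, hd1q, hd2q, hd3q⟩,
     ⟨Sr, Finset.mem_powersetCard.mpr ⟨hSrA, hSrc⟩, Tr,
        Finset.mem_powersetCard.mpr ⟨hTrB, hTrc⟩, hd1r, hd2r, hd3r⟩⟩
end

section
/- For all integers r, s, t ≥ 2, the theta graph Θ_{2r,2s,2t} is not (4:2)-choosable. -/
open SimpleGraph Finset

lemma walk_support_get' {V : Type*} {G : SimpleGraph V} :
    ∀ {u v : V} (p : G.Walk u v) (i : ℕ) (h : i < p.support.length),
      p.support.get ⟨i, h⟩ = p.getVert i := by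
  intro u v p
  induction p with
  | nil =>
    intro i h
    simp only [Walk.support_nil, List.length_singleton] at h
    interval_cases i
    simp [Walk.getVert]
  | cons a q ih =>
    intro i h
    cases i with
    | zero => simp [Walk.getVert]
    | succ n =>
      simp only [Walk.support_cons] at h ⊢
      rw [List.get_cons_succ]
      rw [ih]
      rfl

lemma path_getVert_inj' {V : Type*} {G : SimpleGraph V} {u v : V} {p : G.Walk u v}
    (hp : p.IsPath) {i j : ℕ} (hi : i ≤ p.length) (hj : j ≤ p.length)
    (hij : p.getVert i = p.getVert j) : i = j := by
  have h1 : i < p.support.length := by rw [Walk.length_support]; omega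
  have h2 : j < p.support.length := by rw [Walk.length_support]; omega
  have hinj := List.nodup_iff_injective_get.mp hp.support_nodup
  have : (⟨i, h1⟩ : Fin p.support.length) = ⟨j, h2⟩ := by
    apply hinj
    rw [walk_support_get', walk_support_get', hij]
  simpa using this

lemma forced_compl' {U C D : Finset ℕ} (hC : C ⊆ U) (hD : D ⊆ U) (h : Disjoint C D)
    (hCc : C.card = 2) (hDc : D.card = 2) (hU : U.card = 4) : D = U \ C := by
  apply Finset.eq_of_subset_of_card_le (Finset.subset_sdiff.mpr ⟨hD, h.symm⟩)
  rw [Finset.card_sdiff_of_subset hC, hU, hCc, hDc]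

lemma transmit' {V : Type*} {G : SimpleGraph V} {u v : V} (P : G.Walk u v)
    (f L : V → Finset ℕ) (U : Finset ℕ) (hU : U.card = 4)
    (hfL : ∀ x, f x ⊆ L x) (hfc : ∀ x, (f x).card = 2)
    (hadj : ∀ ⦃a b⦄, G.Adj a b → Disjoint (f a) (f b))
    (m : ℕ) (hm : m ≤ P.length) (hLU : ∀ i ≤ m, L (P.getVert i) = U) :
    ∀ j ≤ m, f (P.getVert j) = if Even j then f u else U \ f u := by
  have hfu : f u ⊆ U := by
    have := hfL u
    rw [← P.getVert_zero, ← hLU 0 (Nat.zero_le _)]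
    simpa using this
  intro j
  induction j with
  | zero => intro _; simp [P.getVert_zero, Nat.even_iff]
  | succ n ih =>
    intro hn
    have hprev := ih (by omega)
    have hGadj : G.Adj (P.getVert n) (P.getVert (n + 1)) :=
      P.adj_getVert_succ (by omega)
    have hdis := hadj hGadj
    have hsubn : f (P.getVert n) ⊆ U := by
      have := hfL (P.getVert n); rwa [hLU n (by omega)] at this
    have hsubn1 : f (P.getVert (n + 1)) ⊆ U := by
      have := hfL (P.getVert (n + 1)); rwa [hLU (n + 1) hn] at this
    have hstep : f (P.getVert (n + 1)) = U \ f (P.getVert n) :=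
      forced_compl' hsubn hsubn1 hdis (hfc _) (hfc _) hU
    by_cases he : Even n
    · have ho : ¬ Even (n + 1) := by simp only [Nat.even_iff] at he ⊢; omega
      rw [if_neg ho, hstep, hprev, if_pos he]
    · have ho : Even (n + 1) := by simp only [Nat.even_iff] at he ⊢; omega
      rw [if_pos ho, hstep, hprev, if_neg he,
        Finset.sdiff_sdiff_self_left, Finset.inter_eq_right.mpr hfu]

lemma key_combinatorial' :
    ∀ A ∈ ({1,2,3,4} : Finset ℕ).powersetCard 2,
    ∀ B ∈ ({1,2,3,4} : Finset ℕ).powersetCard 2,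
    ¬ ((∃ C ∈ ({1,2,3,5} : Finset ℕ).powersetCard 2, ∃ D ∈ ({1,2,4,5} : Finset ℕ).powersetCard 2,
          Disjoint (({1,2,3,4} : Finset ℕ) \ A) C ∧ Disjoint C D ∧ Disjoint D B) ∧
       (∃ C ∈ ({1,2,4,5} : Finset ℕ).powersetCard 2, ∃ D ∈ ({1,3,4,5} : Finset ℕ).powersetCard 2,
          Disjoint (({1,2,3,4} : Finset ℕ) \ A) C ∧ Disjoint C D ∧ Disjoint D B) ∧
       (∃ C ∈ ({1,3,4,5} : Finset ℕ).powersetCard 2, ∃ D ∈ ({1,2,3,5} : Finset ℕ).powersetCard 2,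
          Disjoint (({1,2,3,4} : Finset ℕ) \ A) C ∧ Disjoint C D ∧ Disjoint D B)) := by
  decide

lemma path_block' {V : Type*} {G : SimpleGraph V} {u v : V} (P : G.Walk u v)
    (f L : V → Finset ℕ) (n : ℕ) (hn : 2 ≤ n) (hPl : P.length = 2 * n)
    (N O : Finset ℕ)
    (hfL : ∀ x, f x ⊆ L x) (hfc : ∀ x, (f x).card = 2)
    (hadj : ∀ ⦃a b⦄, G.Adj a b → Disjoint (f a) (f b))
    (hLU : ∀ i ≤ 2 * n - 3, L (P.getVert i) = {1,2,3,4})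
    (hLN : L (P.getVert (2 * n - 2)) = N) (hLO : L (P.getVert (2 * n - 1)) = O) :
    ∃ C ∈ N.powersetCard 2, ∃ D ∈ O.powersetCard 2,
      Disjoint (({1,2,3,4} : Finset ℕ) \ f u) C ∧ Disjoint C D ∧ Disjoint D (f v) := by
  have htr := transmit' P f L {1,2,3,4} (by decide) hfL hfc hadj (2 * n - 3)
    (by rw [hPl]; omega) hLU
  have hx : f (P.getVert (2 * n - 3)) = ({1,2,3,4} : Finset ℕ) \ f u := by
    have h := htr (2 * n - 3) le_rfl
    rwa [if_neg (by rw [Nat.even_iff]; omega : ¬ Even (2 * n - 3))] at h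
  have ha1 : G.Adj (P.getVert (2 * n - 3)) (P.getVert (2 * n - 2)) := by
    have := P.adj_getVert_succ (i := 2 * n - 3) (by rw [hPl]; omega)
    rwa [show 2 * n - 3 + 1 = 2 * n - 2 from by omega] at this
  have ha2 : G.Adj (P.getVert (2 * n - 2)) (P.getVert (2 * n - 1)) := by
    have := P.adj_getVert_succ (i := 2 * n - 2) (by rw [hPl]; omega)
    rwa [show 2 * n - 2 + 1 = 2 * n - 1 from by omega] at this
  have ha3 : G.Adj (P.getVert (2 * n - 1)) v := by
    have := P.adj_getVert_succ (i := 2 * n - 1) (by rw [hPl]; omega)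
    rw [show 2 * n - 1 + 1 = 2 * n from by omega] at this
    rwa [show P.getVert (2 * n) = v from by rw [← hPl]; exact P.getVert_length] at this
  refine ⟨f (P.getVert (2 * n - 2)),
    Finset.mem_powersetCard.mpr ⟨hLN ▸ hfL _, hfc _⟩,
    f (P.getVert (2 * n - 1)),
    Finset.mem_powersetCard.mpr ⟨hLO ▸ hfL _, hfc _⟩, ?_, hadj ha2, hadj ha3⟩
  rw [← hx]; exact hadj ha1

/-- For all `r, s, t ≥ 2`, the theta graph `Θ_{2r,2s,2t}` is not `(4:2)`-choosable. -/
theorem theta_even_not_choosable (r s t : ℕ) (hr : 2 ≤ r) (hs : 2 ≤ s) (ht : 2 ≤ t)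
    (V : Type) (G : SimpleGraph V) (u v : V)
    (hG : IsThetaGraph G u v (2 * r) (2 * s) (2 * t)) :
    ¬ Choosable G 4 2 := by
  classical
  obtain ⟨huv, P, Q, R, hP, hQ, hR, hPl, hQl, hRl, hPQ, hPR, hQR, hsup, hedge⟩ := hG
  intro hch
  -- the six special vertices: the last two internal vertices of each path
  set p1 := P.getVert (2 * r - 2) with hp1def
  set p2 := P.getVert (2 * r - 1) with hp2def
  set q1 := Q.getVert (2 * s - 2) with hq1def
  set q2 := Q.getVert (2 * s - 1) with hq2def
  set w1 := R.getVert (2 * t - 2) with hw1def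
  set w2 := R.getVert (2 * t - 1) with hw2def
  -- injectivity helpers
  have hPne : ∀ i j, i ≤ 2 * r → j ≤ 2 * r → i ≠ j → P.getVert i ≠ P.getVert j := by
    intro i j hi hj hne heq
    exact hne (path_getVert_inj' hP (by rw [hPl]; omega) (by rw [hPl]; omega) heq)
  have hQne : ∀ i j, i ≤ 2 * s → j ≤ 2 * s → i ≠ j → Q.getVert i ≠ Q.getVert j := by
    intro i j hi hj hne heq
    exact hne (path_getVert_inj' hQ (by rw [hQl]; omega) (by rw [hQl]; omega) heq)
  have hRne : ∀ i j, i ≤ 2 * t → j ≤ 2 * t → i ≠ j → R.getVert i ≠ R.getVert j := by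
    intro i j hi hj hne heq
    exact hne (path_getVert_inj' hR (by rw [hRl]; omega) (by rw [hRl]; omega) heq)
  have hPv : P.getVert (2 * r) = v := by rw [← hPl]; exact P.getVert_length
  have hQv : Q.getVert (2 * s) = v := by rw [← hQl]; exact Q.getVert_length
  have hRv : R.getVert (2 * t) = v := by rw [← hRl]; exact R.getVert_length
  -- special vertices are internal
  have hp1u : p1 ≠ u := by
    have := hPne (2 * r - 2) 0 (by omega) (by omega) (by omega)
    rwa [P.getVert_zero] at this
  have hp2u : p2 ≠ u := by
    have := hPne (2 * r - 1) 0 (by omega) (by omega) (by omega)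
    rwa [P.getVert_zero] at this
  have hp1v : p1 ≠ v := by
    have := hPne (2 * r - 2) (2 * r) (by omega) le_rfl (by omega)
    rwa [hPv] at this
  have hp2v : p2 ≠ v := by
    have := hPne (2 * r - 1) (2 * r) (by omega) le_rfl (by omega)
    rwa [hPv] at this
  have hq1u : q1 ≠ u := by
    have := hQne (2 * s - 2) 0 (by omega) (by omega) (by omega)
    rwa [Q.getVert_zero] at this
  have hq2u : q2 ≠ u := by
    have := hQne (2 * s - 1) 0 (by omega) (by omega) (by omega)
    rwa [Q.getVert_zero] at this
  have hq1v : q1 ≠ v := by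
    have := hQne (2 * s - 2) (2 * s) (by omega) le_rfl (by omega)
    rwa [hQv] at this
  have hq2v : q2 ≠ v := by
    have := hQne (2 * s - 1) (2 * s) (by omega) le_rfl (by omega)
    rwa [hQv] at this
  have hw1u : w1 ≠ u := by
    have := hRne (2 * t - 2) 0 (by omega) (by omega) (by omega)
    rwa [R.getVert_zero] at this
  have hw2u : w2 ≠ u := by
    have := hRne (2 * t - 1) 0 (by omega) (by omega) (by omega)
    rwa [R.getVert_zero] at this
  have hw1v : w1 ≠ v := by
    have := hRne (2 * t - 2) (2 * t) (by omega) le_rfl (by omega)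
    rwa [hRv] at this
  have hw2v : w2 ≠ v := by
    have := hRne (2 * t - 1) (2 * t) (by omega) le_rfl (by omega)
    rwa [hRv] at this
  -- memberships
  have hPg : ∀ i, i ≤ 2 * r → P.getVert i ∈ P.support := fun i hi =>
    Walk.mem_support_iff_exists_getVert.mpr ⟨i, rfl, by rw [hPl]; omega⟩
  have hQg : ∀ i, i ≤ 2 * s → Q.getVert i ∈ Q.support := fun i hi =>
    Walk.mem_support_iff_exists_getVert.mpr ⟨i, rfl, by rw [hQl]; omega⟩
  have hRg : ∀ i, i ≤ 2 * t → R.getVert i ∈ R.support := fun i hi =>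
    Walk.mem_support_iff_exists_getVert.mpr ⟨i, rfl, by rw [hRl]; omega⟩
  have hp1mem : p1 ∈ P.support := hPg _ (by omega)
  have hp2mem : p2 ∈ P.support := hPg _ (by omega)
  have hq1mem : q1 ∈ Q.support := hQg _ (by omega)
  have hq2mem : q2 ∈ Q.support := hQg _ (by omega)
  have hw1mem : w1 ∈ R.support := hRg _ (by omega)
  have hw2mem : w2 ∈ R.support := hRg _ (by omega)
  -- non-memberships across paths
  have hp1Q : p1 ∉ Q.support := fun h => (hPQ p1 hp1mem h).elim hp1u hp1v
  have hp2Q : p2 ∉ Q.support := fun h => (hPQ p2 hp2mem h).elim hp2u hp2v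
  have hp1R : p1 ∉ R.support := fun h => (hPR p1 hp1mem h).elim hp1u hp1v
  have hp2R : p2 ∉ R.support := fun h => (hPR p2 hp2mem h).elim hp2u hp2v
  have hq1P : q1 ∉ P.support := fun h => (hPQ q1 h hq1mem).elim hq1u hq1v
  have hq2P : q2 ∉ P.support := fun h => (hPQ q2 h hq2mem).elim hq2u hq2v
  have hq1R : q1 ∉ R.support := fun h => (hQR q1 hq1mem h).elim hq1u hq1v
  have hq2R : q2 ∉ R.support := fun h => (hQR q2 hq2mem h).elim hq2u hq2v
  have hw1P : w1 ∉ P.support := fun h => (hPR w1 h hw1mem).elim hw1u hw1v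
  have hw2P : w2 ∉ P.support := fun h => (hPR w2 h hw2mem).elim hw2u hw2v
  have hw1Q : w1 ∉ Q.support := fun h => (hQR w1 h hw1mem).elim hw1u hw1v
  have hw2Q : w2 ∉ Q.support := fun h => (hQR w2 h hw2mem).elim hw2u hw2v
  -- the bad list assignment
  set L : V → Finset ℕ := fun x =>
    if x = p1 then {1,2,3,5} else if x = p2 then {1,2,4,5} else
    if x = q1 then {1,2,4,5} else if x = q2 then {1,3,4,5} else
    if x = w1 then {1,3,4,5} else if x = w2 then {1,2,3,5} else {1,2,3,4} with hLdef
  have hLval : ∀ x : V, x ≠ p1 → x ≠ p2 → x ≠ q1 → x ≠ q2 → x ≠ w1 → x ≠ w2 →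
      L x = {1,2,3,4} := by
    intro x h1 h2 h3 h4 h5 h6
    simp only [hLdef]
    rw [if_neg h1, if_neg h2, if_neg h3, if_neg h4, if_neg h5, if_neg h6]
  have hLcard : ∀ x, (L x).card = 4 := by
    intro x
    simp only [hLdef]
    split_ifs <;> decide
  obtain ⟨f, hfL, hfc, hfadj⟩ := hch L hLcard
  -- list values at the special vertices
  have hLp1 : L p1 = {1,2,3,5} := by
    simp only [hLdef]
    simp
  have hp2p1 : p2 ≠ p1 := hPne _ _ (by omega) (by omega) (by omega)
  have hLp2 : L p2 = {1,2,4,5} := by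
    simp only [hLdef]
    rw [if_neg hp2p1]
    simp
  have hq1p1 : q1 ≠ p1 := fun h => hp1Q (h ▸ hq1mem)
  have hq1p2 : q1 ≠ p2 := fun h => hp2Q (h ▸ hq1mem)
  have hq2p1 : q2 ≠ p1 := fun h => hp1Q (h ▸ hq2mem)
  have hq2p2 : q2 ≠ p2 := fun h => hp2Q (h ▸ hq2mem)
  have hq2q1 : q2 ≠ q1 := hQne _ _ (by omega) (by omega) (by omega)
  have hLq1 : L q1 = {1,2,4,5} := by
    simp only [hLdef]
    rw [if_neg hq1p1, if_neg hq1p2]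
    simp
  have hLq2 : L q2 = {1,3,4,5} := by
    simp only [hLdef]
    rw [if_neg hq2p1, if_neg hq2p2, if_neg hq2q1]
    simp
  have hw1p1 : w1 ≠ p1 := fun h => hp1R (h ▸ hw1mem)
  have hw1p2 : w1 ≠ p2 := fun h => hp2R (h ▸ hw1mem)
  have hw1q1 : w1 ≠ q1 := fun h => hq1R (h ▸ hw1mem)
  have hw1q2 : w1 ≠ q2 := fun h => hq2R (h ▸ hw1mem)
  have hw2p1 : w2 ≠ p1 := fun h => hp1R (h ▸ hw2mem)
  have hw2p2 : w2 ≠ p2 := fun h => hp2R (h ▸ hw2mem)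
  have hw2q1 : w2 ≠ q1 := fun h => hq1R (h ▸ hw2mem)
  have hw2q2 : w2 ≠ q2 := fun h => hq2R (h ▸ hw2mem)
  have hw2w1 : w2 ≠ w1 := hRne _ _ (by omega) (by omega) (by omega)
  have hLw1 : L w1 = {1,3,4,5} := by
    simp only [hLdef]
    rw [if_neg hw1p1, if_neg hw1p2, if_neg hw1q1, if_neg hw1q2]
    simp
  have hLw2 : L w2 = {1,2,3,5} := by
    simp only [hLdef]
    rw [if_neg hw2p1, if_neg hw2p2, if_neg hw2q1, if_neg hw2q2, if_neg hw2w1]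
    simp
  -- list values along the initial segments of the paths
  have hLUP : ∀ i ≤ 2 * r - 3, L (P.getVert i) = {1,2,3,4} := by
    intro i hi
    exact hLval _ (hPne i (2 * r - 2) (by omega) (by omega) (by omega))
      (hPne i (2 * r - 1) (by omega) (by omega) (by omega))
      (fun h => hq1P (h ▸ hPg i (by omega)))
      (fun h => hq2P (h ▸ hPg i (by omega)))
      (fun h => hw1P (h ▸ hPg i (by omega)))
      (fun h => hw2P (h ▸ hPg i (by omega)))
  have hLUQ : ∀ i ≤ 2 * s - 3, L (Q.getVert i) = {1,2,3,4} := by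
    intro i hi
    exact hLval _ (fun h => hp1Q (h ▸ hQg i (by omega)))
      (fun h => hp2Q (h ▸ hQg i (by omega)))
      (hQne i (2 * s - 2) (by omega) (by omega) (by omega))
      (hQne i (2 * s - 1) (by omega) (by omega) (by omega))
      (fun h => hw1Q (h ▸ hQg i (by omega)))
      (fun h => hw2Q (h ▸ hQg i (by omega)))
  have hLUR : ∀ i ≤ 2 * t - 3, L (R.getVert i) = {1,2,3,4} := by
    intro i hi
    exact hLval _ (fun h => hp1R (h ▸ hRg i (by omega)))
      (fun h => hp2R (h ▸ hRg i (by omega)))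
      (fun h => hq1R (h ▸ hRg i (by omega)))
      (fun h => hq2R (h ▸ hRg i (by omega)))
      (hRne i (2 * t - 2) (by omega) (by omega) (by omega))
      (hRne i (2 * t - 1) (by omega) (by omega) (by omega))
  -- f u and f v are 2-subsets of {1,2,3,4}
  have hLu : L u = {1,2,3,4} :=
    hLval u (Ne.symm hp1u) (Ne.symm hp2u) (Ne.symm hq1u) (Ne.symm hq2u)
      (Ne.symm hw1u) (Ne.symm hw2u)
  have hLv : L v = {1,2,3,4} :=
    hLval v (Ne.symm hp1v) (Ne.symm hp2v) (Ne.symm hq1v) (Ne.symm hq2v)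
      (Ne.symm hw1v) (Ne.symm hw2v)
  exact key_combinatorial' (f u) (Finset.mem_powersetCard.mpr ⟨hLu ▸ hfL u, hfc u⟩)
    (f v) (Finset.mem_powersetCard.mpr ⟨hLv ▸ hfL v, hfc v⟩)
    ⟨path_block' P f L r hr hPl _ _ hfL hfc hfadj hLUP hLp1 hLp2,
     path_block' Q f L s hs hQl _ _ hfL hfc hfadj hLUQ hLq1 hLq2,
     path_block' R f L t ht hRl _ _ hfL hfc hfadj hLUR hLw1 hLw2⟩
end

section
/- For every integer t ≥ 2, the graph Θ_{2,2,2,2t} is not (4:2)-choosable. -/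
open SimpleGraph

lemma getVert_eq_support_getElem {V : Type*} {G : SimpleGraph V} {a b : V}
    (p : G.Walk a b) {i : ℕ} (hi : i ≤ p.length) :
    p.getVert i = p.support[i]'(by rw [Walk.length_support]; omega) := by
  induction p generalizing i with
  | nil =>
    simp only [Walk.length_nil, Nat.le_zero] at hi
    subst hi; simp
  | cons h q ih =>
    cases i with
    | zero => simp
    | succ n =>
      have hi' : n ≤ q.length := by simpa using hi
      simp only [Walk.support_cons, Walk.getVert_cons_succ, List.getElem_cons_succ]
      exact ih hi'

lemma IsPath.getVert_inj' {V : Type*} {G : SimpleGraph V} {a b : V}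
    {p : G.Walk a b} (hp : p.IsPath) {i j : ℕ} (hi : i ≤ p.length) (hj : j ≤ p.length)
    (h : p.getVert i = p.getVert j) : i = j := by
  rw [getVert_eq_support_getElem p hi, getVert_eq_support_getElem p hj] at h
  exact (List.Nodup.getElem_inj_iff hp.support_nodup).mp h

lemma getVert_mem_support' {V : Type*} {G : SimpleGraph V} {a b : V}
    (p : G.Walk a b) {i : ℕ} (hi : i ≤ p.length) : p.getVert i ∈ p.support :=
  Walk.mem_support_iff_exists_getVert.mpr ⟨i, rfl, hi⟩

lemma forced {C X Y : Finset ℕ} (hC : C.card = 4) (hXC : X ⊆ C) (hYC : Y ⊆ C)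
    (hX : X.card = 2) (hY : Y.card = 2) (hd : Disjoint X Y) : Y = C \ X := by
  have h1 : Y ⊆ C \ X := Finset.subset_sdiff.mpr ⟨hYC, hd.symm⟩
  have h2 : (C \ X).card = 2 := by rw [Finset.card_sdiff_of_subset hXC, hC, hX]
  exact Finset.eq_of_subset_of_card_le h1 (by omega)

set_option maxRecDepth 10000 in
lemma key_s7 : ∀ A ∈ Finset.powersetCard 2 ({1,2,3,4}:Finset ℕ),
    ∀ B ∈ Finset.powersetCard 2 ({1,3,5,6}:Finset ℕ),
    ∀ A1 ∈ Finset.powersetCard 2 ({1,2,3,5}:Finset ℕ),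
    ∀ A2 ∈ Finset.powersetCard 2 ({1,2,4,5}:Finset ℕ),
    ∀ A3 ∈ Finset.powersetCard 2 ({1,2,3,4}:Finset ℕ),
    Disjoint A A1 → Disjoint A1 A2 → Disjoint A2 A3 → Disjoint A3 B →
    2 ≤ (({1,2,5,6}:Finset ℕ) \ (A ∪ B)).card →
    2 ≤ (({1,3,4,5}:Finset ℕ) \ (A ∪ B)).card →
    2 ≤ (({1,3,4,6}:Finset ℕ) \ (A ∪ B)).card → False := by decide



/-- `G` is the generalized theta graph `Θ_{a,b,c,d}`: two vertices `u ≠ v` joined by four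
internally vertex-disjoint paths of `a`, `b`, `c`, `d` edges, covering all vertices and
edges of `G`. -/
def IsTheta4Graph {V : Type*} (G : SimpleGraph V) (u v : V) (a b c d : ℕ) : Prop :=
  u ≠ v ∧ ∃ (P Q R S : G.Walk u v),
    P.IsPath ∧ Q.IsPath ∧ R.IsPath ∧ S.IsPath ∧
    P.length = a ∧ Q.length = b ∧ R.length = c ∧ S.length = d ∧
    (∀ x, x ∈ P.support → x ∈ Q.support → x = u ∨ x = v) ∧
    (∀ x, x ∈ P.support → x ∈ R.support → x = u ∨ x = v) ∧
    (∀ x, x ∈ P.support → x ∈ S.support → x = u ∨ x = v) ∧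
    (∀ x, x ∈ Q.support → x ∈ R.support → x = u ∨ x = v) ∧
    (∀ x, x ∈ Q.support → x ∈ S.support → x = u ∨ x = v) ∧
    (∀ x, x ∈ R.support → x ∈ S.support → x = u ∨ x = v) ∧
    (∀ x : V, x ∈ P.support ∨ x ∈ Q.support ∨ x ∈ R.support ∨ x ∈ S.support) ∧
    (∀ e ∈ G.edgeSet, e ∈ P.edges ∨ e ∈ Q.edges ∨ e ∈ R.edges ∨ e ∈ S.edges)

/-- For every `t ≥ 2`, the graph `Θ_{2,2,2,2t}` is not `(4:2)`-choosable. -/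
theorem theta2222t_not_choosable (t : ℕ) (ht : 2 ≤ t)
    (V : Type) (G : SimpleGraph V) (u v : V)
    (hG : IsTheta4Graph G u v 2 2 2 (2 * t)) :
    ¬ Choosable G 4 2 := by
  classical
  obtain ⟨huv, P, Q, R, S, hP, hQ, hR, hS, hPl, hQl, hRl, hSl,
    hPQ, hPR, hPS, hQR, hQS, hRS, -, -⟩ := hG
  intro hch
  set L : V → Finset ℕ := fun x =>
    if x = u then {1,2,3,4}
    else if x = v then {1,3,5,6}
    else if x ∈ P.support then {1,2,5,6}
    else if x ∈ Q.support then {1,3,4,5}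
    else if x ∈ R.support then {1,3,4,6}
    else if x = S.getVert 1 then {1,2,3,5}
    else if x = S.getVert 2 then {1,2,4,5}
    else {1,2,3,4} with hLdef
  obtain ⟨f, hfsub, hfcard, hfdis⟩ := hch L (by
    intro x
    simp only [hLdef]
    split_ifs <;> decide)
  -- basic facts about S
  have hy0 : S.getVert 0 = u := S.getVert_zero
  have hyN : S.getVert (2*t) = v := by
    have hv := S.getVert_length
    rwa [hSl] at hv
  have hSinj : ∀ {i j : ℕ}, i ≤ 2*t → j ≤ 2*t → S.getVert i = S.getVert j → i = j := by
    intro i j hi hj hij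
    exact IsPath.getVert_inj' hS (by rw [hSl]; exact hi) (by rw [hSl]; exact hj) hij
  have hymem : ∀ i, i ≤ 2*t → S.getVert i ∈ S.support := fun i hi =>
    getVert_mem_support' S (by rw [hSl]; exact hi)
  have hynu : ∀ i, 0 < i → i ≤ 2*t → S.getVert i ≠ u := by
    intro i h0 hN h
    have := hSinj hN (by omega) (h.trans hy0.symm)
    omega
  have hynv : ∀ i, i < 2*t → S.getVert i ≠ v := by
    intro i hN h
    have := hSinj (by omega) (le_refl _) (h.trans hyN.symm)
    omega
  have hadjS : ∀ i, i < 2*t → G.Adj (S.getVert i) (S.getVert (i+1)) := fun i hi =>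
    S.adj_getVert_succ (by rw [hSl]; exact hi)
  -- lists of internal vertices of S
  have hLraw : ∀ i, 0 < i → i < 2*t →
      L (S.getVert i) = (if S.getVert i = S.getVert 1 then ({1,2,3,5}:Finset ℕ)
        else if S.getVert i = S.getVert 2 then {1,2,4,5} else {1,2,3,4}) := by
    intro i h0 hN
    have hs := hymem i (by omega)
    have hnP : S.getVert i ∉ P.support := by
      intro hmem
      rcases hPS _ hmem hs with h | h
      · exact hynu i h0 (by omega) h
      · exact hynv i hN h
    have hnQ : S.getVert i ∉ Q.support := by
      intro hmem
      rcases hQS _ hmem hs with h | h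
      · exact hynu i h0 (by omega) h
      · exact hynv i hN h
    have hnR : S.getVert i ∉ R.support := by
      intro hmem
      rcases hRS _ hmem hs with h | h
      · exact hynu i h0 (by omega) h
      · exact hynv i hN h
    simp only [hLdef]
    rw [if_neg (hynu i h0 (by omega)), if_neg (hynv i hN), if_neg hnP, if_neg hnQ, if_neg hnR]
  have hLy1 : L (S.getVert 1) = {1,2,3,5} := by
    rw [hLraw 1 (by omega) (by omega), if_pos rfl]
  have hLy2 : L (S.getVert 2) = {1,2,4,5} := by
    rw [hLraw 2 (by omega) (by omega), if_neg (fun h => by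
      have := hSinj (by omega) (by omega) h; omega), if_pos rfl]
  have hLyC : ∀ i, 3 ≤ i → i < 2*t → L (S.getVert i) = {1,2,3,4} := by
    intro i h3 hN
    rw [hLraw i (by omega) hN, if_neg (fun h => by
      have := hSinj (by omega) (by omega) h; omega), if_neg (fun h => by
      have := hSinj (by omega) (by omega) h; omega)]
  -- lists at u and v
  have hLu : L u = {1,2,3,4} := by simp [hLdef]
  have hLv : L v = {1,3,5,6} := by
    have h' : v ≠ u := Ne.symm huv
    simp [hLdef, h']
  -- midpoints of short paths
  have hmid : ∀ (W : G.Walk u v), W.IsPath → W.length = 2 →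
      W.getVert 1 ≠ u ∧ W.getVert 1 ≠ v ∧ W.getVert 1 ∈ W.support ∧
        G.Adj u (W.getVert 1) ∧ G.Adj (W.getVert 1) v := by
    intro W hW hWl
    have h2v : W.getVert 2 = v := by rw [← hWl]; exact W.getVert_length
    refine ⟨?_, ?_, ?_, ?_, ?_⟩
    · intro h
      have : (1:ℕ) = 0 := IsPath.getVert_inj' hW (by omega) (by omega)
        (h.trans W.getVert_zero.symm)
      omega
    · intro h
      have : (1:ℕ) = 2 := IsPath.getVert_inj' hW (by omega) (by omega) (h.trans h2v.symm)
      omega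
    · exact getVert_mem_support' W (by omega)
    · have := W.adj_getVert_succ (i := 0) (by omega)
      rwa [W.getVert_zero] at this
    · have := W.adj_getVert_succ (i := 1) (by omega)
      rwa [h2v] at this
  obtain ⟨hpu, hpv, hpP, haup, hapv⟩ := hmid P hP hPl
  obtain ⟨hqu, hqv, hqQ, hauq, haqv⟩ := hmid Q hQ hQl
  obtain ⟨hru, hrv, hrR, haur, harv⟩ := hmid R hR hRl
  have hLp : L (P.getVert 1) = {1,2,5,6} := by
    simp only [hLdef]; rw [if_neg hpu, if_neg hpv, if_pos hpP]
  have hqnP : Q.getVert 1 ∉ P.support := by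
    intro h
    rcases hPQ _ h hqQ with h' | h'
    · exact hqu h'
    · exact hqv h'
  have hLq : L (Q.getVert 1) = {1,3,4,5} := by
    simp only [hLdef]; rw [if_neg hqu, if_neg hqv, if_neg hqnP, if_pos hqQ]
  have hrnP : R.getVert 1 ∉ P.support := by
    intro h
    rcases hPR _ h hrR with h' | h'
    · exact hru h'
    · exact hrv h'
  have hrnQ : R.getVert 1 ∉ Q.support := by
    intro h
    rcases hQR _ h hrR with h' | h'
    · exact hru h'
    · exact hrv h'
  have hLr : L (R.getVert 1) = {1,3,4,6} := by
    simp only [hLdef]; rw [if_neg hru, if_neg hrv, if_neg hrnP, if_neg hrnQ, if_pos hrR]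
  -- subset facts
  have hA : f u ⊆ {1,2,3,4} := by have := hfsub u; rwa [hLu] at this
  have hB : f v ⊆ {1,3,5,6} := by have := hfsub v; rwa [hLv] at this
  have hA1 : f (S.getVert 1) ⊆ {1,2,3,5} := by have := hfsub (S.getVert 1); rwa [hLy1] at this
  have hA2 : f (S.getVert 2) ⊆ {1,2,4,5} := by have := hfsub (S.getVert 2); rwa [hLy2] at this
  have hA3 : f (S.getVert 3) ⊆ {1,2,3,4} := by
    have := hfsub (S.getVert 3); rwa [hLyC 3 (by omega) (by omega)] at this
  -- chain disjointness
  have hdAA1 : Disjoint (f u) (f (S.getVert 1)) := by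
    have := hfdis (hadjS 0 (by omega)); rwa [hy0] at this
  have hdA12 : Disjoint (f (S.getVert 1)) (f (S.getVert 2)) := hfdis (hadjS 1 (by omega))
  have hdA23 : Disjoint (f (S.getVert 2)) (f (S.getVert 3)) := hfdis (hadjS 2 (by omega))
  -- alternation along the long path
  have halt : ∀ k, 3 ≤ k → k ≤ 2*t - 1 →
      f (S.getVert k) = if Odd k then f (S.getVert 3)
        else ({1,2,3,4}:Finset ℕ) \ f (S.getVert 3) := by
    intro k hk3
    induction k, hk3 using Nat.le_induction with
    | base => intro _; rw [if_pos (by decide)]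
    | succ n hn ih =>
      intro hle
      have hind := ih (by omega)
      have hCn1 : L (S.getVert (n+1)) = {1,2,3,4} := hLyC (n+1) (by omega) (by omega)
      have hdisj := hfdis (hadjS n (by omega))
      have hyn_sub : f (S.getVert n) ⊆ ({1,2,3,4}:Finset ℕ) := by
        rw [hind]
        split_ifs
        · exact hA3
        · exact Finset.sdiff_subset
      have hstep : f (S.getVert (n+1)) = ({1,2,3,4}:Finset ℕ) \ f (S.getVert n) :=
        forced (by decide) hyn_sub (by rw [← hCn1]; exact hfsub _) (hfcard _) (hfcard _) hdisj
      rw [hstep, hind]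
      rcases Nat.even_or_odd n with he | ho
      · rw [if_neg (Nat.not_odd_iff_even.mpr he), if_pos (Even.add_one he)]
        exact Finset.sdiff_sdiff_eq_self hA3
      · rw [if_pos ho, if_neg (by
          rw [Nat.odd_iff] at ho ⊢
          omega)]
  -- last internal vertex
  have hlast : f (S.getVert (2*t-1)) = f (S.getVert 3) := by
    rw [halt (2*t-1) (by omega) (le_refl _), if_pos ⟨t-1, by omega⟩]
  have hadjlast : G.Adj (S.getVert (2*t-1)) v := by
    have h := hadjS (2*t-1) (by omega)
    have h2 : 2*t-1+1 = 2*t := by omega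
    rwa [h2, hyN] at h
  have hd3B : Disjoint (f (S.getVert 3)) (f v) := by
    have := hfdis hadjlast
    rwa [hlast] at this
  -- midpoint blocking bounds
  have hblock : ∀ (w : V) (Sw : Finset ℕ), G.Adj u w → G.Adj w v → L w = Sw →
      2 ≤ (Sw \ (f u ∪ f v)).card := by
    intro w Sw h1 h2 hSw
    have hsub : f w ⊆ Sw \ (f u ∪ f v) := by
      rw [Finset.subset_sdiff]
      refine ⟨by rw [← hSw]; exact hfsub w, ?_⟩
      rw [Finset.disjoint_union_right]
      exact ⟨(hfdis h1).symm, hfdis h2⟩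
    calc 2 = (f w).card := (hfcard w).symm
    _ ≤ _ := Finset.card_le_card hsub
  exact key_s7 (f u) (Finset.mem_powersetCard.mpr ⟨hA, hfcard u⟩)
    (f v) (Finset.mem_powersetCard.mpr ⟨hB, hfcard v⟩)
    (f (S.getVert 1)) (Finset.mem_powersetCard.mpr ⟨hA1, hfcard _⟩)
    (f (S.getVert 2)) (Finset.mem_powersetCard.mpr ⟨hA2, hfcard _⟩)
    (f (S.getVert 3)) (Finset.mem_powersetCard.mpr ⟨hA3, hfcard _⟩)
    hdAA1 hdA12 hdA23 hd3B
    (hblock _ _ haup hapv hLp) (hblock _ _ hauq haqv hLq) (hblock _ _ haur harv hLr)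
end

section
/- Let m and n be positive integers, let P be a path with n vertices v_1, …, v_n in order, and let L be a list assignment on P with |L(v_1)| = |L(v_n)| ≥ 2m and |L(v_i)| = 4m for all i with 2 ≤ i ≤ n−1. Then P is (L:2m)-colourable if and only if S_L(P) ≥ 2mn. -/
/-- Given the lists `L(v_1), …, L(v_n)` of a path (as a list of finsets, in order) and a
"previous" set, the sequence `X_1 = L(v_1)`, `X_i = L(v_i) \ X_{i-1}`. -/
def Xseq : Finset ℕ → List (Finset ℕ) → List (Finset ℕ)
  | _, [] => []
  | prev, l :: ls => (l \ prev) :: Xseq (l \ prev) ls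

/-- `S_L(P) = Σ_{i=1}^n |X_i|`. -/
def SL (ls : List (Finset ℕ)) : ℕ := ((Xseq ∅ ls).map Finset.card).sum

/-- `X_{i+1}` (0-indexed access to the sequence `X_1, …, X_n`). -/
def Xat (ls : List (Finset ℕ)) (i : ℕ) : Finset ℕ := (Xseq ∅ ls).getD i ∅

/-- `A = ∩_{x ∈ V(P)} L(x)`. -/
def Aset : List (Finset ℕ) → Finset ℕ
  | [] => ∅
  | a :: rest => rest.foldl (· ∩ ·) a

/-- For a colour `c`, the least 0-indexed position `i` with `c ∉ L(v_{i+1})`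
(so the paper's `f(c)` is `firstMissing + 1`). -/
noncomputable def firstMissing (ls : List (Finset ℕ)) (c : ℕ) : ℕ :=
  sInf {i | i < ls.length ∧ c ∉ ls.getD i ∅}

open Classical in
/-- `X̂_1 = { c ∈ L(v_1) \ A : f(c) is even }` (with the paper's 1-indexed `f`,
i.e. `firstMissing` is odd). -/
noncomputable def hatX1 (ls : List (Finset ℕ)) : Finset ℕ :=
  (ls.getD 0 ∅ \ Aset ls).filter fun c => Odd (firstMissing ls c)

/-- `X̂_n = X_n \ A`. -/
def hatXn (ls : List (Finset ℕ)) : Finset ℕ := Xat ls (ls.length - 1) \ Aset ls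

/-- `L[p,q]`: delete the colours of `p` from `L(v_1)` and the colours of `q` from `L(v_n)`. -/
def delEnds (p q : Finset ℕ) (ls : List (Finset ℕ)) : List (Finset ℕ) :=
  ((ls.modifyHead (· \ p)).reverse.modifyHead (· \ q)).reverse

/-- The damage `dam_{L,P}(p,q) = S_L(P) − S_{L[p,q]}(P)` (as an integer). -/
def damZ (ls : List (Finset ℕ)) (p q : Finset ℕ) : ℤ :=
  (SL ls : ℤ) - SL (delEnds p q ls)

/-- The path `v_1 ⋯ v_n` with lists `L(v_1), …, L(v_n)` admits a `b`-tuple list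
colouring: consecutive vertices receive disjoint `b`-subsets of their lists. -/
def PathListColorable (b : ℕ) (ls : List (Finset ℕ)) : Prop :=
  ∃ f : ℕ → Finset ℕ,
    (∀ i, i < ls.length → f i ⊆ ls.getD i ∅ ∧ (f i).card = b) ∧
    (∀ i, i + 1 < ls.length → Disjoint (f i) (f (i + 1)))

/-! ### Auxiliary development -/

/-- The running sum of the `X`-sequence, with an explicit "previous" set. -/
def Sg : Finset ℕ → List (Finset ℕ) → ℕ
  | _, [] => 0
  | p, l :: ls => (l \ p).card + Sg (l \ p) ls

lemma Xseq_sum (p : Finset ℕ) (ls : List (Finset ℕ)) :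
    ((Xseq p ls).map Finset.card).sum = Sg p ls := by
  induction ls generalizing p with
  | nil => simp [Xseq, Sg]
  | cons l t ih => simp [Xseq, Sg, ih]

lemma SL_eq_Sg (ls : List (Finset ℕ)) : SL ls = Sg ∅ ls := Xseq_sum ∅ ls

/-- The set of "odd-run" colours of the first list: removing such a colour from
the previous set increases the total `Sg` by one. -/
def Wset : List (Finset ℕ) → Finset ℕ
  | [] => ∅
  | l :: ls => l \ Wset ls

lemma cell_card (l Y W : Finset ℕ) :
    (l \ Y).card + (Y ∩ (l \ W)).card + (l ∩ W).card
      = l.card + ((l \ Y) ∩ W).card := by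
  have A : ((l \ Y) \ W).card + ((l \ Y) ∩ W).card = (l \ Y).card :=
    Finset.card_sdiff_add_card_inter _ _
  have B : (l \ Y) \ W = (l \ W) \ Y := by
    ext x; simp [Finset.mem_sdiff]; tauto
  have C : ((l \ W) \ Y).card + ((l \ W) ∩ Y).card = (l \ W).card :=
    Finset.card_sdiff_add_card_inter _ _
  have D : (l \ W).card + (l ∩ W).card = l.card :=
    Finset.card_sdiff_add_card_inter _ _
  have E : Y ∩ (l \ W) = (l \ W) ∩ Y := Finset.inter_comm _ _
  rw [E]
  rw [B] at A
  omega

/-- Key identity: `Sg Y ls = Sg ∅ ls − |Y ∩ Wset ls|`, in additive form. -/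
lemma Sg_key (ls : List (Finset ℕ)) : ∀ Y : Finset ℕ,
    Sg Y ls + (Y ∩ Wset ls).card = Sg ∅ ls := by
  induction ls with
  | nil => intro Y; simp [Sg, Wset]
  | cons l t ih =>
    intro Y
    have h1 := ih (l \ Y)
    have h2 := ih l
    have h3 := cell_card l Y (Wset t)
    simp only [Sg, Wset, Finset.sdiff_empty] at *
    omega

/-- Recursive form of path list colourability. -/
def Col (b : ℕ) : Finset ℕ → List (Finset ℕ) → Prop
  | _, [] => True
  | p, l :: ls => ∃ f : Finset ℕ, f ⊆ l \ p ∧ f.card = b ∧ Col b f ls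

lemma col_of_fun (b : ℕ) : ∀ (ls : List (Finset ℕ)) (p : Finset ℕ) (f : ℕ → Finset ℕ),
    (∀ i, i < ls.length → f i ⊆ ls.getD i ∅ ∧ (f i).card = b) →
    (∀ i, i + 1 < ls.length → Disjoint (f i) (f (i + 1))) →
    (0 < ls.length → Disjoint p (f 0)) → Col b p ls := by
  intro ls
  induction ls with
  | nil => intro p f _ _ _; trivial
  | cons l t ih =>
    intro p f hsub hdis hp
    obtain ⟨h0, hc0⟩ := hsub 0 (by simp)
    refine ⟨f 0, ?_, hc0, ?_⟩
    · intro x hx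
      simp only [Finset.mem_sdiff]
      refine ⟨by simpa using h0 hx, ?_⟩
      exact fun hxp => Finset.disjoint_left.1 (hp (by simp)) hxp hx
    · refine ih (f 0) (fun i => f (i + 1)) ?_ ?_ ?_
      · intro i hi
        exact hsub (i + 1) (by simpa using Nat.succ_lt_succ hi)
      · intro i hi
        exact hdis (i + 1) (by simpa using Nat.succ_lt_succ hi)
      · intro ht
        exact hdis 0 (by simpa using Nat.succ_lt_succ ht)

lemma fun_of_col (b : ℕ) : ∀ (ls : List (Finset ℕ)) (p : Finset ℕ), Col b p ls →
    ∃ f : ℕ → Finset ℕ,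
      (∀ i, i < ls.length → f i ⊆ ls.getD i ∅ ∧ (f i).card = b) ∧
      (∀ i, i + 1 < ls.length → Disjoint (f i) (f (i + 1))) ∧
      (0 < ls.length → Disjoint p (f 0)) := by
  intro ls
  induction ls with
  | nil =>
    intro p _
    exact ⟨fun _ => ∅, by simp, by simp, by simp⟩
  | cons l t ih =>
    rintro p ⟨f₁, hf₁, hc₁, hcol⟩
    obtain ⟨g, hg1, hg2, hg3⟩ := ih f₁ hcol
    refine ⟨fun i => match i with | 0 => f₁ | (j+1) => g j, ?_, ?_, ?_⟩
    · rintro (_ | j) hi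
      · exact ⟨fun x hx => (Finset.mem_sdiff.1 (hf₁ hx)).1, hc₁⟩
      · exact hg1 j (by simpa using hi)
    · rintro (_ | j) hi
      · have h0 : 0 < t.length := by simpa using hi
        show Disjoint f₁ (g 0)
        exact hg3 h0
      · exact hg2 j (by simpa using hi)
    · intro _
      rw [Finset.disjoint_left]
      intro x hxp hxf
      exact (Finset.mem_sdiff.1 (hf₁ hxf)).2 hxp

lemma pathcol_iff_col (b : ℕ) (ls : List (Finset ℕ)) :
    PathListColorable b ls ↔ Col b ∅ ls := by
  constructor
  · rintro ⟨f, h1, h2⟩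
    exact col_of_fun b ls ∅ f h1 h2 (fun _ => Finset.disjoint_empty_left _)
  · intro h
    obtain ⟨f, h1, h2, _⟩ := fun_of_col b ls ∅ h
    exact ⟨f, h1, h2⟩

/-- Size-shape of all lists except the first: all internal = `4m`, last `≥ 2m`. -/
def Mid (m : ℕ) : List (Finset ℕ) → Prop
  | [] => True
  | [l] => 2 * m ≤ l.card
  | l :: l' :: ls => l.card = 4 * m ∧ Mid m (l' :: ls)

/-- The pairing lower bound on `Sg` for `Mid`-shaped lists. -/
lemma Sg_lower (m : ℕ) : ∀ ls : List (Finset ℕ), Mid m ls → ∀ p : Finset ℕ,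
    (2 * m * ls.length ≤ Sg p ls + 2 * m) ∧
    (p.card ≤ 2 * m → 2 * m * ls.length ≤ Sg p ls + p.card) := by
  intro ls
  induction ls with
  | nil => intro _ p; simp [Sg]
  | cons l rest ih =>
    intro hmid p
    match rest, hmid with
    | [], hl =>
      have hl' : 2 * m ≤ l.card := hl
      have h2 : l.card ≤ (l \ p).card + p.card := Finset.card_le_card_sdiff_add_card
      have hu : Sg p [l] = (l \ p).card := by simp [Sg]
      rw [hu]
      simp only [List.length_cons, List.length_nil]
      have hM : 2 * m * (0 + 1) = 2 * m := by ring
      rw [hM]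
      constructor
      · omega
      · intro _; omega
    | r :: t, ⟨h4, hmidr⟩ =>
      have ih' := ih hmidr (l \ p)
      obtain ⟨P1, P2⟩ := ih'
      have h2 : l.card ≤ (l \ p).card + p.card := Finset.card_le_card_sdiff_add_card
      have hlen : (l :: r :: t).length = (r :: t).length + 1 := by simp
      have hM : 2 * m * ((r :: t).length + 1) = 2 * m * (r :: t).length + 2 * m := by ring
      rw [hlen, hM]
      rw [show Sg p (l :: r :: t) = (l \ p).card + Sg (l \ p) (r :: t) from rfl]
      constructor
      · by_cases hx : (l \ p).card ≤ 2 * m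
        · have := P2 hx; omega
        · omega
      · intro hp; omega

lemma mid_tail (m : ℕ) (l : Finset ℕ) (ls : List (Finset ℕ)) (h : Mid m (l :: ls)) :
    Mid m ls := by
  match ls, h with
  | [], _ => trivial
  | r :: t, ⟨_, h2⟩ => exact h2

lemma col_shift (b : ℕ) (p l : Finset ℕ) (ls : List (Finset ℕ)) :
    Col b p (l :: ls) ↔ Col b ∅ ((l \ p) :: ls) := by
  simp [Col]

lemma sg_shift (p l : Finset ℕ) (ls : List (Finset ℕ)) :
    Sg p (l :: ls) = Sg ∅ ((l \ p) :: ls) := by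
  simp [Sg]

/-- The generalized main lemma: first list only needs `≥ 2m` colours. -/
lemma gen_main (m : ℕ) : ∀ (ls : List (Finset ℕ)) (l₁ : Finset ℕ),
    2 * m ≤ l₁.card → Mid m ls →
    (Col (2 * m) ∅ (l₁ :: ls) ↔ 2 * m * (ls.length + 1) ≤ Sg ∅ (l₁ :: ls)) := by
  intro ls
  induction ls with
  | nil =>
    intro l₁ h₁ _
    constructor
    · intro _; simpa [Sg] using h₁
    · intro _
      obtain ⟨f, hf, hc⟩ := Finset.exists_subset_card_eq h₁
      exact ⟨f, by simpa using hf, hc, trivial⟩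
  | cons l₂ rest ih =>
    intro l₁ h₁ hmid
    have hmidr : Mid m rest := mid_tail m l₂ rest hmid
    have hS₀l₁ := Sg_key (l₂ :: rest) l₁
    have hfull : Sg ∅ (l₁ :: l₂ :: rest) = l₁.card + Sg l₁ (l₂ :: rest) := by
      rw [show Sg ∅ (l₁ :: l₂ :: rest)
            = (l₁ \ ∅).card + Sg (l₁ \ ∅) (l₂ :: rest) from rfl, Finset.sdiff_empty]
    have hlen2 : 2 * m * ((l₂ :: rest).length + 1)
        = 2 * m * (rest.length + 1) + 2 * m := by
      simp only [List.length_cons]; ring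
    constructor
    · rintro ⟨f₁, hf₁sub', hf₁card, hcol⟩
      rw [Finset.sdiff_empty] at hf₁sub'
      have hcol2 := hcol
      obtain ⟨f₂, hf₂sub, hf₂card, -⟩ := hcol2
      have hl₂f₁ : 2 * m ≤ (l₂ \ f₁).card := by
        rw [← hf₂card]; exact Finset.card_le_card hf₂sub
      have hIH := (ih (l₂ \ f₁) hl₂f₁ hmidr).mp ((col_shift _ _ _ _).mp hcol)
      rw [← sg_shift] at hIH
      have hkeyf₁ := Sg_key (l₂ :: rest) f₁
      have hincl : (l₁ ∩ Wset (l₂ :: rest)).card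
          ≤ (f₁ ∩ Wset (l₂ :: rest)).card + (l₁ \ f₁).card := by
        calc (l₁ ∩ Wset (l₂ :: rest)).card
            ≤ ((f₁ ∩ Wset (l₂ :: rest)) ∪ (l₁ \ f₁)).card := by
              apply Finset.card_le_card
              intro x hx
              rw [Finset.mem_inter] at hx
              by_cases hxf : x ∈ f₁
              · exact Finset.mem_union_left _ (Finset.mem_inter.2 ⟨hxf, hx.2⟩)
              · exact Finset.mem_union_right _ (Finset.mem_sdiff.2 ⟨hx.1, hxf⟩)
          _ ≤ (f₁ ∩ Wset (l₂ :: rest)).card + (l₁ \ f₁).card :=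
              Finset.card_union_le _ _
      have hsd : (l₁ \ f₁).card + f₁.card = l₁.card :=
        Finset.card_sdiff_add_card_eq_card hf₁sub'
      omega
    · intro hS
      rw [hfull] at hS
      have hS₀low := (Sg_lower m (l₂ :: rest) hmid ∅).2 (by simp)
      simp only [Finset.card_empty, add_zero] at hS₀low
      have hTlen : 2 * m * (l₂ :: rest).length = 2 * m * (rest.length + 1) := by
        simp only [List.length_cons]
      rw [hTlen] at hS₀low
      -- construct f₁
      have hmain : ∃ f₁ : Finset ℕ, f₁ ⊆ l₁ ∧ f₁.card = 2 * m ∧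
          2 * m * (rest.length + 1) ≤ Sg f₁ (l₂ :: rest) := by
        by_cases hcase : 2 * m ≤ (l₁ \ Wset (l₂ :: rest)).card
        · obtain ⟨f₁, hf₁sub, hf₁card⟩ := Finset.exists_subset_card_eq hcase
          refine ⟨f₁, fun x hx => (Finset.mem_sdiff.1 (hf₁sub hx)).1, hf₁card, ?_⟩
          have hkey := Sg_key (l₂ :: rest) f₁
          have hempty : f₁ ∩ Wset (l₂ :: rest) = ∅ := by
            apply Finset.eq_empty_of_forall_notMem
            intro x hx
            rw [Finset.mem_inter] at hx
            exact (Finset.mem_sdiff.1 (hf₁sub hx.1)).2 hx.2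
          rw [hempty] at hkey
          simp only [Finset.card_empty, add_zero] at hkey
          omega
        · push_neg at hcase
          have hO : (l₁ \ Wset (l₂ :: rest)).card + (l₁ ∩ Wset (l₂ :: rest)).card
              = l₁.card := Finset.card_sdiff_add_card_inter _ _
          obtain ⟨E, hEsub, hEcard⟩ :=
            Finset.exists_subset_card_eq (s := l₁ ∩ Wset (l₂ :: rest))
              (n := 2 * m - (l₁ \ Wset (l₂ :: rest)).card) (by omega)
          refine ⟨(l₁ \ Wset (l₂ :: rest)) ∪ E, ?_, ?_, ?_⟩
          · intro x hx
            rcases Finset.mem_union.1 hx with h | h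
            · exact (Finset.mem_sdiff.1 h).1
            · exact (Finset.mem_inter.1 (hEsub h)).1
          · have hdisj : Disjoint (l₁ \ Wset (l₂ :: rest)) E := by
              rw [Finset.disjoint_left]
              intro x hx hxE
              exact (Finset.mem_sdiff.1 hx).2 (Finset.mem_inter.1 (hEsub hxE)).2
            rw [Finset.card_union_of_disjoint hdisj]
            omega
          · have hkey := Sg_key (l₂ :: rest) ((l₁ \ Wset (l₂ :: rest)) ∪ E)
            have hEW : ((l₁ \ Wset (l₂ :: rest)) ∪ E) ∩ Wset (l₂ :: rest) = E := by
              ext x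
              simp only [Finset.mem_inter, Finset.mem_union, Finset.mem_sdiff]
              constructor
              · rintro ⟨h | h, hxW⟩
                · exact absurd hxW h.2
                · exact h
              · intro hx
                exact ⟨Or.inr hx, (Finset.mem_inter.1 (hEsub hx)).2⟩
            rw [hEW] at hkey
            omega
      obtain ⟨f₁, hf₁sub, hf₁card, hf₁S⟩ := hmain
      have hl₂f₁ : 2 * m ≤ (l₂ \ f₁).card := by
        cases rest with
        | nil =>
          have hu : Sg f₁ [l₂] = (l₂ \ f₁).card := by simp [Sg]
          rw [hu] at hf₁S
          have : 2 * m * (0 + 1) = 2 * m := by ring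
          simp only [List.length_nil] at hf₁S
          omega
        | cons r t =>
          have h4 : l₂.card = 4 * m := hmid.1
          have h2 : l₂.card ≤ (l₂ \ f₁).card + f₁.card :=
            Finset.card_le_card_sdiff_add_card
          omega
      have hcol' := (ih (l₂ \ f₁) hl₂f₁ hmidr).mpr (by rw [← sg_shift]; omega)
      exact ⟨f₁, by simpa using hf₁sub, hf₁card, (col_shift _ _ _ _).mpr hcol'⟩

lemma mid_build (m : ℕ) : ∀ t : List (Finset ℕ),
    (∀ i, i + 1 < t.length → (t.getD i ∅).card = 4 * m) →
    (t ≠ [] → 2 * m ≤ (t.getD (t.length - 1) ∅).card) → Mid m t := by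
  intro t
  induction t with
  | nil => intro _ _; trivial
  | cons a u ih =>
    intro h4 hlast
    match u with
    | [] =>
      have := hlast (by simp)
      simpa [Mid] using this
    | b :: v =>
      constructor
      · exact h4 0 (by simp)
      · apply ih
        · intro i hi
          exact h4 (i + 1) (by simpa using Nat.succ_lt_succ hi)
        · intro _
          have h := hlast (by simp)
          have : (a :: b :: v).length - 1 = ((b :: v).length - 1) + 1 := by
            simp
          rw [this] at h
          simpa using h

/-- Lemma 1 (Lemma `lem:xuding`): for a path `P` on `n` vertices whose endpoint lists
have equal size `≥ 2m` and whose internal lists have size `4m`, `P` is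
`(L:2m)`-colourable iff `S_L(P) ≥ 2mn`. -/
theorem path_colorable_iff_SL (m n : ℕ) (hm : 0 < m) (hn : 0 < n)
    (ls : List (Finset ℕ)) (hlen : ls.length = n)
    (hends : (ls.getD 0 ∅).card = (ls.getD (n - 1) ∅).card)
    (hfirst : 2 * m ≤ (ls.getD 0 ∅).card)
    (hmid : ∀ i, 0 < i → i + 1 < n → (ls.getD i ∅).card = 4 * m) :
    PathListColorable (2 * m) ls ↔ 2 * m * n ≤ SL ls := by
  cases ls with
  | nil => rw [← hlen] at hn; simp at hn
  | cons h t =>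
    have hlent : t.length = n - 1 := by simp at hlen; omega
    have hfirst' : 2 * m ≤ h.card := by simpa using hfirst
    have hmidt : Mid m t := by
      apply mid_build
      · intro i hi
        have : t.getD i ∅ = (h :: t).getD (i + 1) ∅ := by simp
        rw [this]
        exact hmid (i + 1) (by omega) (by omega)
      · intro hne
        have h1 : 0 < t.length := List.length_pos_iff.2 hne
        have : t.getD (t.length - 1) ∅ = (h :: t).getD (n - 1) ∅ := by
          have : n - 1 = (t.length - 1) + 1 := by omega
          rw [this]
          simp
        rw [this, ← hends]
        exact hfirst
    have := gen_main m t h hfirst' hmidt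
    rw [pathcol_iff_col, SL_eq_Sg]
    have hn' : t.length + 1 = n := by omega
    rw [← hn']
    exact this
end

section
/- Let L be a list assignment on a path P with an odd number n of vertices v_1, …, v_n. Then for any finite sets of colours p and q, S_{L[p,q]}(P) = S_L(P) − ( |(A ∪ X̂_1) ∩ p| + |(A ∪ X̂_n) ∩ q| − |A ∩ p ∩ q| ). -/
def xcount : Bool → List Bool → ℕ
  | _, [] => 0
  | prev, b :: bs => (if (b && !prev) = true then 1 else 0) + xcount (b && !prev) bs

def xlastB : Bool → List Bool → Bool
  | prev, [] => prev
  | prev, b :: bs => xlastB (b && !prev) bs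

def frontRun : List Bool → ℕ
  | [] => 0
  | b :: bs => if b = true then frontRun bs + 1 else 0

def delB (α β : Bool) (bs : List Bool) : List Bool :=
  ((bs.modifyHead (· && !α)).reverse.modifyHead (· && !β)).reverse

lemma lemG (bs : List Bool) :
    xcount false bs = xcount true bs + (if Odd (frontRun bs) then 1 else 0) := by
  induction bs with
  | nil => simp [xcount, frontRun]
  | cons b t ih =>
    cases b with
    | false => simp [xcount, frontRun]
    | true =>
      simp only [xcount, frontRun, if_pos rfl, Bool.and_self, Bool.not_true,
        Bool.not_false, Bool.and_true, Bool.and_false, Bool.true_and]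
      rw [ih]
      by_cases h : Odd (frontRun t) <;>
        simp [Nat.odd_add_one, h, Nat.not_odd_iff_even, Nat.not_even_iff_odd] at * <;> omega

lemma lemF (α : Bool) (bs : List Bool) :
    xcount false bs =
      xcount false (bs.modifyHead (· && !α)) +
        (if α = true ∧ Odd (frontRun bs) then 1 else 0) := by
  cases α with
  | false =>
    cases bs <;> simp [List.modifyHead]
  | true =>
    cases bs with
    | nil => simp [List.modifyHead, xcount, frontRun]
    | cons b t =>
      cases b with
      | false => simp [List.modifyHead, xcount, frontRun]
      | true =>
        simp only [List.modifyHead, Bool.not_true, Bool.and_false, xcount, frontRun,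
          Bool.false_and, Bool.not_false, Bool.true_and, if_pos rfl]
        rw [lemG t]
        by_cases h : Odd (frontRun t) <;>
          simp [Nat.odd_add_one, h, Nat.not_odd_iff_even, Nat.not_even_iff_odd] at * <;> omega

lemma xcount_snoc (l : List Bool) (prev b : Bool) :
    xcount prev (l ++ [b]) =
      xcount prev l + (if (b && !(xlastB prev l)) = true then 1 else 0) := by
  induction l generalizing prev with
  | nil => simp [xcount, xlastB]
  | cons a t ih => simp [xcount, xlastB, ih, Nat.add_assoc]

lemma xlast_snoc (l : List Bool) (prev b : Bool) :
    xlastB prev (l ++ [b]) = (b && !(xlastB prev l)) := by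
  induction l generalizing prev with
  | nil => simp [xlastB]
  | cons a t ih => simp [xlastB, ih]

lemma lemB (β : Bool) (bs : List Bool) :
    xcount false bs =
      xcount false ((bs.reverse.modifyHead (· && !β)).reverse) +
        (if β = true ∧ xlastB false bs = true then 1 else 0) := by
  rcases List.eq_nil_or_concat bs with rfl | ⟨L, b, rfl⟩
  · simp [xcount, xlastB]
  · simp only [List.concat_eq_append]
    rw [List.reverse_append, List.reverse_singleton, List.singleton_append,
      List.modifyHead, List.reverse_cons, List.reverse_reverse]
    rw [xcount_snoc, xcount_snoc, xlast_snoc]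
    cases hxl : xlastB false L <;> cases b <;> cases β <;> simp

lemma allTrue_xlast (t : List Bool) (h : t.all id = true) (prev : Bool) :
    xlastB prev t = (if Even t.length then prev else !prev) := by
  induction t generalizing prev with
  | nil => simp [xlastB]
  | cons a t ih =>
    simp only [List.all_cons, Bool.and_eq_true, id] at h
    obtain ⟨rfl, h⟩ := h
    rw [show xlastB prev (true :: t) = xlastB (!prev) t by simp [xlastB],
      ih (by simpa [List.all_eq_true] using h) (!prev)]
    by_cases he : Even t.length <;>
      simp [he, Nat.even_add_one, List.length_cons]

lemma xlast_indep (t : List Bool) (h : t.all id = false) (p q : Bool) :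
    xlastB p t = xlastB q t := by
  induction t generalizing p q with
  | nil => simp at h
  | cons a t ih =>
    cases a with
    | false => simp [xlastB]
    | true =>
      simp only [List.all_cons, Bool.true_and, id] at h
      exact ih h _ _

lemma lemX (α : Bool) (bs : List Bool) (hodd : Odd bs.length) :
    xlastB false (bs.modifyHead (· && !α)) =
      (xlastB false bs && !(α && bs.all id)) := by
  cases α with
  | false =>
    cases bs <;> simp [List.modifyHead]
  | true =>
    cases bs with
    | nil => simp at hodd
    | cons b t =>
      cases b with
      | false => simp [List.modifyHead, xlastB]
      | true =>
        simp only [List.modifyHead, Bool.not_true, Bool.and_false, List.all_cons,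
          Bool.true_and, Bool.and_true, id]
        cases hall : t.all id with
        | false =>
          simp only [Bool.and_false, Bool.not_false, Bool.and_true]
          rw [show xlastB false (false :: t) = xlastB false t by simp [xlastB],
            show xlastB false (true :: t) = xlastB true t by simp [xlastB]]
          exact xlast_indep t hall false true
        | true =>
          simp only [Bool.and_true, Bool.not_true, Bool.and_false]
          rw [show xlastB false (false :: t) = xlastB false t by simp [xlastB]]
          rw [allTrue_xlast t hall false]
          have : Even t.length := by
            simp only [List.length_cons, Nat.odd_add_one, Nat.not_odd_iff_even] at hodd
            exact hodd
          simp [this]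

lemma coreB (bs : List Bool) (hodd : Odd bs.length) (α β : Bool) :
    (xcount false (delB α β bs) : ℤ) =
      (xcount false bs : ℤ) -
        ((if α = true ∧ Odd (frontRun bs) then 1 else 0) +
         (if β = true ∧ xlastB false bs = true then 1 else 0) -
         (if α = true ∧ β = true ∧ bs.all id = true then 1 else 0)) := by
  have hA : bs.all id = true → xlastB false bs = true := by
    intro h
    rw [allTrue_xlast bs h false]
    simp [Nat.not_even_iff_odd.mpr hodd]
  have hF := lemF α bs
  have hB := lemB β (bs.modifyHead (· && !α))
  rw [lemX α bs hodd] at hB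
  rw [hB] at hF
  simp only [delB]
  have hFZ : (xcount false bs : ℤ) =
      (xcount false ((bs.modifyHead (· && !α)).reverse.modifyHead (· && !β)).reverse : ℤ) +
        (if β = true ∧ (xlastB false bs && !(α && bs.all id)) = true then 1 else 0) +
        (if α = true ∧ Odd (frontRun bs) then 1 else 0) := by
    rw [hF]; push_cast; ring
  have key : (if β = true ∧ (xlastB false bs && !(α && bs.all id)) = true then (1:ℤ) else 0)
      = (if β = true ∧ xlastB false bs = true then 1 else 0) -
        (if α = true ∧ β = true ∧ bs.all id = true then 1 else 0) := by
    by_cases h2 : α = true ∧ β = true ∧ bs.all id = true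
    · simp [h2.1, h2.2.1, h2.2.2, hA h2.2.2]
    · by_cases h1 : β = true ∧ xlastB false bs = true
      · have hb : (α && bs.all id) = false := by
          cases hα : α <;> cases hall : bs.all id <;> simp_all
        rw [if_pos ⟨h1.1, by simp [h1.2, hb]⟩, if_pos h1, if_neg h2]; ring
      · rw [if_neg (fun h => h1 ⟨h.1, (Bool.and_eq_true _ _ |>.mp h.2).1⟩),
          if_neg h1, if_neg h2]
        ring
  rw [key] at hFZ
  omega

lemma decide_sdiff (c : ℕ) (a p : Finset ℕ) :
    decide (c ∈ a \ p) = (decide (c ∈ a) && !decide (c ∈ p)) := by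
  by_cases h1 : c ∈ a <;> by_cases h2 : c ∈ p <;> simp [*]

lemma getD_map (c : ℕ) (ls : List (Finset ℕ)) (i : ℕ) (h : i < ls.length) :
    (ls.map fun l => decide (c ∈ l)).getD i false = decide (c ∈ ls.getD i ∅) := by
  induction ls generalizing i with
  | nil => simp at h
  | cons a t ih =>
    cases i with
    | zero => simp
    | succ n => simpa using ih n (by simpa using h)

lemma frontRun_le_length (bs : List Bool) : frontRun bs ≤ bs.length := by
  induction bs with
  | nil => simp [frontRun]
  | cons b t ih => cases b <;> simp [frontRun] <;> omega

lemma frontRun_getD_true (bs : List Bool) (j : ℕ) (h : j < frontRun bs) :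
    bs.getD j false = true := by
  induction bs generalizing j with
  | nil => simp [frontRun] at h
  | cons b t ih =>
    cases b with
    | false => simp [frontRun] at h
    | true =>
      cases j with
      | zero => simp
      | succ n =>
        simp only [frontRun, if_true, if_pos trivial] at h
        simp at h
        simpa using ih n (by omega)

lemma frontRun_getD_false (bs : List Bool) (h : frontRun bs < bs.length) :
    bs.getD (frontRun bs) false = false := by
  induction bs with
  | nil => simp at h
  | cons b t ih =>
    cases b with
    | false => simp [frontRun]
    | true =>
      simp only [frontRun, List.length_cons] at h ⊢
      simp at h ⊢
      simpa using ih (by omega)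

lemma frontRun_eq_length_of_all (bs : List Bool) (h : bs.all id = true) :
    frontRun bs = bs.length := by
  induction bs with
  | nil => simp [frontRun]
  | cons b t ih =>
    simp only [List.all_cons, Bool.and_eq_true, id] at h
    obtain ⟨rfl, h⟩ := h
    simp [frontRun, ih h]

lemma frontRun_lt_of_not_all (bs : List Bool) (h : ¬ bs.all id = true) :
    frontRun bs < bs.length := by
  rcases Nat.lt_or_ge (frontRun bs) bs.length with h1 | h1
  · exact h1
  · exfalso
    apply h
    have heq : frontRun bs = bs.length := le_antisymm (frontRun_le_length bs) h1
    rw [List.all_eq_true]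
    intro b hb
    obtain ⟨j, hj, rfl⟩ := List.mem_iff_getElem.mp hb
    have := frontRun_getD_true bs j (by omega)
    rwa [List.getD_eq_getElem bs false hj] at this

lemma mem_foldl_inter (c : ℕ) (rest : List (Finset ℕ)) (a : Finset ℕ) :
    c ∈ rest.foldl (· ∩ ·) a ↔ c ∈ a ∧ ∀ l ∈ rest, c ∈ l := by
  induction rest generalizing a with
  | nil => simp
  | cons b t ih =>
    simp only [List.foldl_cons, ih, Finset.mem_inter, List.mem_cons]
    constructor
    · rintro ⟨⟨h1, h2⟩, h3⟩
      exact ⟨h1, by rintro l (rfl | hl); exacts [h2, h3 l hl]⟩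
    · rintro ⟨h1, h2⟩
      exact ⟨⟨h1, h2 b (Or.inl rfl)⟩, fun l hl => h2 l (Or.inr hl)⟩

lemma mem_Aset (c : ℕ) (ls : List (Finset ℕ)) :
    c ∈ Aset ls ↔ ls ≠ [] ∧ ∀ l ∈ ls, c ∈ l := by
  cases ls with
  | nil => simp [Aset]
  | cons a t =>
    simp only [Aset, mem_foldl_inter, ne_eq, reduceCtorEq, not_false_iff, true_and,
      List.mem_cons]
    constructor
    · rintro ⟨h1, h2⟩
      rintro l (rfl | hl); exacts [h1, h2 l hl]
    · intro h
      exact ⟨h a (Or.inl rfl), fun l hl => h l (Or.inr hl)⟩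

lemma all_map_iff (c : ℕ) (ls : List (Finset ℕ)) :
    (ls.map fun l => decide (c ∈ l)).all id = true ↔ ∀ l ∈ ls, c ∈ l := by
  simp [List.all_eq_true]

lemma firstMissing_eq_frontRun (c : ℕ) (ls : List (Finset ℕ))
    (h : ¬ ∀ l ∈ ls, c ∈ l) :
    firstMissing ls c = frontRun (ls.map fun l => decide (c ∈ l)) := by
  set bs := ls.map fun l => decide (c ∈ l) with hbs
  have hlen : bs.length = ls.length := by simp [hbs]
  have hnall : ¬ bs.all id = true := by rw [all_map_iff]; exact h
  have hfr : frontRun bs < ls.length := hlen ▸ frontRun_lt_of_not_all bs hnall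
  have hmem : frontRun bs ∈ {i | i < ls.length ∧ c ∉ ls.getD i ∅} := by
    refine ⟨hfr, ?_⟩
    have := frontRun_getD_false bs (hlen ▸ hfr)
    rw [hbs, getD_map c ls _ hfr] at this
    simpa using this
  refine le_antisymm (Nat.sInf_le hmem) ?_
  by_contra hlt
  push_neg at hlt
  have hinf := Nat.sInf_mem (⟨frontRun bs, hmem⟩ :
    Set.Nonempty {i | i < ls.length ∧ c ∉ ls.getD i ∅})
  have h1 : firstMissing ls c < ls.length := hinf.1
  have h2 : c ∉ ls.getD (firstMissing ls c) ∅ := hinf.2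
  have := frontRun_getD_true bs _ hlt
  rw [hbs, getD_map c ls _ h1] at this
  exact h2 (of_decide_eq_true this)

lemma mem_AX1_iff (c : ℕ) (ls : List (Finset ℕ)) (hodd : Odd ls.length) :
    c ∈ Aset ls ∪ hatX1 ls ↔ Odd (frontRun (ls.map fun l => decide (c ∈ l))) := by
  have hne : ls ≠ [] := by rintro rfl; simp at hodd
  set bs := ls.map fun l => decide (c ∈ l) with hbs
  have hlen : bs.length = ls.length := by simp [hbs]
  by_cases hA : c ∈ Aset ls
  · have hall : bs.all id = true := by
      rw [hbs, all_map_iff]; exact ((mem_Aset c ls).mp hA).2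
    rw [frontRun_eq_length_of_all bs hall, hlen]
    simp [Finset.mem_union, hA, hodd]
  · have hnall : ¬ ∀ l ∈ ls, c ∈ l := by
      intro hf; exact hA ((mem_Aset c ls).mpr ⟨hne, hf⟩)
    have hfm : firstMissing ls c = frontRun bs := firstMissing_eq_frontRun c ls hnall
    simp only [Finset.mem_union, hA, false_or, hatX1, Finset.mem_filter, Finset.mem_sdiff,
      hfm]
    constructor
    · rintro ⟨⟨_, _⟩, h2⟩; exact h2
    · intro hOdd
      refine ⟨⟨?_, by simp⟩, hOdd⟩
      have h0 : 0 < frontRun bs := hOdd.pos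
      have := frontRun_getD_true bs 0 h0
      rw [hbs, getD_map c ls 0 (List.length_pos_iff.mpr hne)] at this
      simpa using this

lemma Xseq_length (prev : Finset ℕ) (ls : List (Finset ℕ)) :
    (Xseq prev ls).length = ls.length := by
  induction ls generalizing prev with
  | nil => rfl
  | cons a t ih => simp [Xseq, ih]

lemma mem_Xseq_subset (s : Finset ℕ) (ls : List (Finset ℕ)) (prev : Finset ℕ)
    (h : s ∈ Xseq prev ls) : ∃ l ∈ ls, s ⊆ l := by
  induction ls generalizing prev with
  | nil => simp [Xseq] at h
  | cons a t ih =>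
    simp only [Xseq, List.mem_cons] at h
    rcases h with rfl | h
    · exact ⟨a, List.mem_cons_self, Finset.sdiff_subset⟩
    · obtain ⟨l, hl, hs⟩ := ih (a \ prev) h
      exact ⟨l, List.mem_cons_of_mem _ hl, hs⟩

lemma Xseq_last (c : ℕ) (ls : List (Finset ℕ)) (prev : Finset ℕ) (h : ls ≠ []) :
    c ∈ (Xseq prev ls).getD (ls.length - 1) ∅ ↔
      xlastB (decide (c ∈ prev)) (ls.map fun l => decide (c ∈ l)) = true := by
  induction ls generalizing prev with
  | nil => simp at h
  | cons a t ih =>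
    cases t with
    | nil =>
      simp [Xseq, xlastB, decide_sdiff, Finset.mem_sdiff]
    | cons b t' =>
      rw [show Xseq prev (a :: b :: t') = (a \ prev) :: Xseq (a \ prev) (b :: t') from rfl]
      rw [show (a :: b :: t').length - 1 = ((b :: t').length - 1) + 1 by simp]
      rw [List.getD_cons_succ]
      rw [show (a :: b :: t').map (fun l => decide (c ∈ l)) =
        decide (c ∈ a) :: (b :: t').map (fun l => decide (c ∈ l)) from rfl]
      rw [show xlastB (decide (c ∈ prev))
          (decide (c ∈ a) :: (b :: t').map (fun l => decide (c ∈ l))) =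
          xlastB (decide (c ∈ a) && !decide (c ∈ prev))
            ((b :: t').map (fun l => decide (c ∈ l))) from rfl]
      rw [← decide_sdiff]
      exact ih (a \ prev) (by simp)

lemma mem_AXn_iff (c : ℕ) (ls : List (Finset ℕ)) (hodd : Odd ls.length) :
    c ∈ Aset ls ∪ hatXn ls ↔
      xlastB false (ls.map fun l => decide (c ∈ l)) = true := by
  have hne : ls ≠ [] := by rintro rfl; simp at hodd
  set bs := ls.map fun l => decide (c ∈ l) with hbs
  have hlen : bs.length = ls.length := by simp [hbs]
  have hXat : c ∈ Xat ls (ls.length - 1) ↔ xlastB false bs = true := by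
    have := Xseq_last c ls ∅ hne
    simpa [Xat] using this
  by_cases hA : c ∈ Aset ls
  · have hall : bs.all id = true := by
      rw [hbs, all_map_iff]; exact ((mem_Aset c ls).mp hA).2
    rw [allTrue_xlast bs hall false]
    simp [Finset.mem_union, hA, hlen, Nat.not_even_iff_odd.mpr hodd]
  · simp only [Finset.mem_union, hA, false_or, hatXn, Finset.mem_sdiff]
    rw [← hXat]
    tauto

lemma cardsub {S U : Finset ℕ} (h : S ⊆ U) :
    S.card = ∑ c ∈ U, if c ∈ S then 1 else 0 := by
  rw [Finset.sum_ite_mem, Finset.inter_eq_right.mpr h]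
  exact Finset.card_eq_sum_ones S

lemma sumX (U : Finset ℕ) (ls : List (Finset ℕ)) (prev : Finset ℕ)
    (h : ∀ l ∈ ls, l ⊆ U) :
    ((Xseq prev ls).map Finset.card).sum =
      ∑ c ∈ U, xcount (decide (c ∈ prev)) (ls.map fun l => decide (c ∈ l)) := by
  induction ls generalizing prev with
  | nil => simp [Xseq, xcount]
  | cons a t ih =>
    have hsub : a \ prev ⊆ U := Finset.sdiff_subset.trans (h a (List.mem_cons_self))
    rw [show Xseq prev (a :: t) = (a \ prev) :: Xseq (a \ prev) t from rfl]
    rw [List.map_cons, List.sum_cons, cardsub hsub,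
      ih (a \ prev) (fun l hl => h l (List.mem_cons_of_mem _ hl)),
      ← Finset.sum_add_distrib]
    refine Finset.sum_congr rfl fun c _ => ?_
    rw [show (a :: t).map (fun l => decide (c ∈ l)) =
      decide (c ∈ a) :: t.map (fun l => decide (c ∈ l)) from rfl]
    rw [show xcount (decide (c ∈ prev)) (decide (c ∈ a) :: t.map fun l => decide (c ∈ l)) =
      (if (decide (c ∈ a) && !decide (c ∈ prev)) = true then 1 else 0) +
        xcount (decide (c ∈ a) && !decide (c ∈ prev)) (t.map fun l => decide (c ∈ l))
      from rfl]
    rw [← decide_sdiff]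
    congr 1
    by_cases hm : c ∈ a \ prev <;> simp [hm]

lemma mem_modifyHead {g : Finset ℕ → Finset ℕ} {l : List (Finset ℕ)} {x : Finset ℕ}
    (h : x ∈ l.modifyHead g) : x ∈ l ∨ ∃ y ∈ l, x = g y := by
  cases l with
  | nil => simp at h
  | cons a t =>
    simp only [List.modifyHead, List.mem_cons] at h
    rcases h with rfl | h
    · exact Or.inr ⟨a, List.mem_cons_self, rfl⟩
    · exact Or.inl (List.mem_cons_of_mem _ h)

lemma delEnds_subset (p q : Finset ℕ) (ls : List (Finset ℕ)) (l : Finset ℕ)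
    (h : l ∈ delEnds p q ls) : ∃ l₀ ∈ ls, l ⊆ l₀ := by
  unfold delEnds at h
  rw [List.mem_reverse] at h
  rcases mem_modifyHead h with h1 | ⟨y, hy, rfl⟩
  · rw [List.mem_reverse] at h1
    rcases mem_modifyHead h1 with h2 | ⟨z, hz, rfl⟩
    · exact ⟨l, h2, le_refl _⟩
    · exact ⟨z, hz, Finset.sdiff_subset⟩
  · rw [List.mem_reverse] at hy
    rcases mem_modifyHead hy with h2 | ⟨z, hz, rfl⟩
    · exact ⟨y, h2, Finset.sdiff_subset⟩
    · exact ⟨z, hz, Finset.sdiff_subset.trans Finset.sdiff_subset⟩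

lemma map_modifyHead_bool (c : ℕ) (s : Finset ℕ) (l : List (Finset ℕ)) :
    (l.modifyHead (· \ s)).map (fun t => decide (c ∈ t)) =
      ((l.map fun t => decide (c ∈ t)).modifyHead (· && !decide (c ∈ s))) := by
  cases l with
  | nil => rfl
  | cons a t => simp [List.modifyHead, decide_sdiff]

lemma delEnds_map (c : ℕ) (p q : Finset ℕ) (ls : List (Finset ℕ)) :
    (delEnds p q ls).map (fun l => decide (c ∈ l)) =
      delB (decide (c ∈ p)) (decide (c ∈ q)) (ls.map fun l => decide (c ∈ l)) := by
  unfold delEnds delB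
  rw [List.map_reverse, map_modifyHead_bool, List.map_reverse, map_modifyHead_bool]

lemma subset_foldr (ls : List (Finset ℕ)) (l : Finset ℕ) (h : l ∈ ls) :
    l ⊆ ls.foldr (· ∪ ·) ∅ := by
  induction ls with
  | nil => simp at h
  | cons a t ih =>
    rcases List.mem_cons.mp h with rfl | h
    · exact Finset.subset_union_left
    · exact Finset.Subset.trans (ih h) Finset.subset_union_right

/-- Lemma `lem:oddhat`: for a path with an odd number of vertices,
`S_{L[p,q]}(P) = S_L(P) − (|(A ∪ X̂_1) ∩ p| + |(A ∪ X̂_n) ∩ q| − |A ∩ p ∩ q|)`. -/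
theorem SL_delEnds_eq (ls : List (Finset ℕ)) (hodd : Odd ls.length)
    (p q : Finset ℕ) :
    (SL (delEnds p q ls) : ℤ) =
      (SL ls : ℤ) -
        ((((Aset ls ∪ hatX1 ls) ∩ p).card : ℤ) +
          (((Aset ls ∪ hatXn ls) ∩ q).card : ℤ) -
          ((Aset ls ∩ p ∩ q).card : ℤ)) := by
  set U := ls.foldr (· ∪ ·) ∅ with hU
  have hne : ls ≠ [] := by rintro rfl; simp at hodd
  have hsubU : ∀ l ∈ ls, l ⊆ U := fun l hl => subset_foldr ls l hl
  have hsubU' : ∀ l ∈ delEnds p q ls, l ⊆ U := by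
    intro l hl
    obtain ⟨l0, hl0, hs⟩ := delEnds_subset p q ls l hl
    exact hs.trans (hsubU l0 hl0)
  obtain ⟨l0, hl0⟩ := List.exists_mem_of_ne_nil ls hne
  have hA1 : Aset ls ⊆ U := fun c hc => hsubU l0 hl0 (((mem_Aset c ls).mp hc).2 l0 hl0)
  have hhead : ls.getD 0 ∅ ∈ ls := by
    cases ls with
    | nil => exact absurd rfl hne
    | cons a t => simp
  have hX1U : hatX1 ls ⊆ U := by
    intro c hc
    have : c ∈ ls.getD 0 ∅ := by
      simp only [hatX1, Finset.mem_filter, Finset.mem_sdiff] at hc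
      exact hc.1.1
    exact hsubU _ hhead this
  have hXatU : Xat ls (ls.length - 1) ⊆ U := by
    have hlt : ls.length - 1 < (Xseq ∅ ls).length := by
      rw [Xseq_length]
      have := List.length_pos_iff.mpr hne
      omega
    rw [Xat, List.getD_eq_getElem _ _ hlt]
    obtain ⟨l, hl, hs⟩ := mem_Xseq_subset _ ls ∅ (List.getElem_mem hlt)
    exact hs.trans (hsubU l hl)
  have hXnU : hatXn ls ⊆ U := fun c hc => hXatU (Finset.mem_sdiff.mp hc).1
  have e1 : SL ls = ∑ c ∈ U, xcount false (ls.map fun l => decide (c ∈ l)) := by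
    rw [SL, sumX U ls ∅ hsubU]
    refine Finset.sum_congr rfl fun c _ => ?_
    norm_num
  have e2 : SL (delEnds p q ls) =
      ∑ c ∈ U, xcount false
        (delB (decide (c ∈ p)) (decide (c ∈ q)) (ls.map fun l => decide (c ∈ l))) := by
    rw [SL, sumX U _ ∅ hsubU']
    refine Finset.sum_congr rfl fun c _ => ?_
    rw [show decide (c ∈ (∅ : Finset ℕ)) = false by simp, delEnds_map]
  have hcard1 : ((Aset ls ∪ hatX1 ls) ∩ p).card =
      ∑ c ∈ U, if decide (c ∈ p) = true ∧
        Odd (frontRun (ls.map fun l => decide (c ∈ l))) then 1 else 0 := by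
    rw [cardsub (Finset.inter_subset_left.trans (Finset.union_subset hA1 hX1U))]
    refine Finset.sum_congr rfl fun c _ => ?_
    refine if_congr ?_ rfl rfl
    rw [Finset.mem_inter, mem_AX1_iff c ls hodd, decide_eq_true_iff]
    tauto
  have hcard2 : ((Aset ls ∪ hatXn ls) ∩ q).card =
      ∑ c ∈ U, if decide (c ∈ q) = true ∧
        xlastB false (ls.map fun l => decide (c ∈ l)) = true then 1 else 0 := by
    rw [cardsub (Finset.inter_subset_left.trans (Finset.union_subset hA1 hXnU))]
    refine Finset.sum_congr rfl fun c _ => ?_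
    refine if_congr ?_ rfl rfl
    rw [Finset.mem_inter, mem_AXn_iff c ls hodd, decide_eq_true_iff]
    tauto
  have hcard3 : (Aset ls ∩ p ∩ q).card =
      ∑ c ∈ U, if decide (c ∈ p) = true ∧ decide (c ∈ q) = true ∧
        ((ls.map fun l => decide (c ∈ l)).all id) = true then 1 else 0 := by
    rw [cardsub ((Finset.inter_subset_left.trans Finset.inter_subset_left).trans hA1)]
    refine Finset.sum_congr rfl fun c _ => ?_
    refine if_congr ?_ rfl rfl
    rw [Finset.mem_inter, Finset.mem_inter, mem_Aset, all_map_iff,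
      decide_eq_true_iff, decide_eq_true_iff]
    constructor
    · rintro ⟨⟨⟨_, h2⟩, h3⟩, h4⟩; exact ⟨h3, h4, h2⟩
    · rintro ⟨h3, h4, h2⟩; exact ⟨⟨⟨hne, h2⟩, h3⟩, h4⟩
  rw [e1, e2, hcard1, hcard2, hcard3]
  push_cast
  rw [show (∑ c ∈ U, (xcount false
        (delB (decide (c ∈ p)) (decide (c ∈ q)) (ls.map fun l => decide (c ∈ l))) : ℤ)) =
      ∑ c ∈ U, ((xcount false (ls.map fun l => decide (c ∈ l)) : ℤ) -
        ((if decide (c ∈ p) = true ∧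
            Odd (frontRun (ls.map fun l => decide (c ∈ l))) then 1 else 0) +
         (if decide (c ∈ q) = true ∧
            xlastB false (ls.map fun l => decide (c ∈ l)) = true then 1 else 0) -
         (if decide (c ∈ p) = true ∧ decide (c ∈ q) = true ∧
            ((ls.map fun l => decide (c ∈ l)).all id) = true then 1 else 0))) from
    Finset.sum_congr rfl fun c _ => coreB _ (by simpa using hodd) _ _]
  rw [Finset.sum_sub_distrib, Finset.sum_sub_distrib, Finset.sum_add_distrib]
end

section
/- Let m be a positive integer, G a graph, and X ⊆ V(G) a set of vertices such that every component of G − X is a path with an odd number of vertices and such that no internal vertex of any such path has a neighbour in X. Let L be a list assignment on G with |L(v)| = 4m for every v ∉ X. Then G is (L:2m)-colourable if and only if the induced subgraph G[X] has a 2m-tuple L-colouring φ such that for every component path P of G − X, with vertices v_1, …, v_n in order: (i) |L(v_1) ∩ φ(N_X(v_1))| ≤ 2m, (ii) |L(v_n) ∩ φ(N_X(v_n))| ≤ 2m, and (iii) dam_{L,P}(φ(N_X(v_1)), φ(N_X(v_n))) ≤ S_L(P) − 2mn, where φ(N_X(w)) denotes the union of the colour sets φ(x) over all neighbours x of w lying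 in X. -/
open Classical in
/-- `φ(N_X(w))`: the union of the colour sets `φ x` over all neighbours `x` of `w`
lying in `X`. -/
noncomputable def phiNX {V : Type*} (G : SimpleGraph V) (X : Finset V)
    (φ : V → Finset ℕ) (w : V) : Finset ℕ :=
  (X.filter fun x => G.Adj w x).biUnion φ


def bX : Bool → List Bool → ℕ
  | _, [] => 0
  | p, a :: t => (if (a && !p) = true then 1 else 0) + bX (a && !p) t

def Sgen (prev : Finset ℕ) (ls : List (Finset ℕ)) : ℕ :=
  ((Xseq prev ls).map Finset.card).sum

lemma Sgen_nil (prev : Finset ℕ) : Sgen prev [] = 0 := rfl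

lemma Sgen_cons (prev l t) : Sgen prev (l :: t) = (l \ prev).card + Sgen (l \ prev) t := by
  simp [Sgen, Xseq]

lemma SL_eq_Sgen (ls) : SL ls = Sgen ∅ ls := rfl

lemma SL_cons (l t) : SL (l :: t) = l.card + Sgen l t := by
  simp [SL_eq_Sgen, Sgen_cons]

lemma card_eq_sum_ind (U s : Finset ℕ) (h : s ⊆ U) :
    s.card = ∑ c ∈ U, if c ∈ s then 1 else 0 := by
  rw [Finset.sum_boole]
  rw [Finset.filter_mem_eq_inter, Finset.inter_eq_right.mpr h]
  simp

lemma decide_mem_sdiff (c : ℕ) (l prev : Finset ℕ) :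
    decide (c ∈ l \ prev) = (decide (c ∈ l) && !decide (c ∈ prev)) := by
  by_cases h1 : c ∈ l <;> by_cases h2 : c ∈ prev <;> simp [h1, h2, Finset.mem_sdiff]

lemma Sgen_eq_sum (U : Finset ℕ) :
    ∀ (ls : List (Finset ℕ)) (prev : Finset ℕ), (∀ l ∈ ls, l ⊆ U) →
      Sgen prev ls = ∑ c ∈ U, bX (decide (c ∈ prev)) (ls.map fun l => decide (c ∈ l))
  | [], prev, _ => by simp [Sgen_nil, bX]
  | l :: t, prev, h => by
    rw [Sgen_cons, Sgen_eq_sum U t (l \ prev) (fun x hx => h x (List.mem_cons_of_mem _ hx))]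
    rw [card_eq_sum_ind U (l \ prev) (le_trans (Finset.sdiff_subset) (h l List.mem_cons_self))]
    rw [← Finset.sum_add_distrib]
    apply Finset.sum_congr rfl
    intro c _
    simp only [List.map_cons, bX, decide_mem_sdiff]
    congr 1
    by_cases h1 : c ∈ l <;> by_cases h2 : c ∈ prev <;> simp [h1, h2, Finset.mem_sdiff]

lemma SL_eq_sum (U : Finset ℕ) (ls : List (Finset ℕ)) (h : ∀ l ∈ ls, l ⊆ U) :
    SL ls = ∑ c ∈ U, bX false (ls.map fun l => decide (c ∈ l)) := by
  rw [SL_eq_Sgen, Sgen_eq_sum U ls ∅ h]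
  simp

def rhoB (z : List Bool) : ℕ := (z.takeWhile id).length + 1

lemma bX_cons_false (p : Bool) (t : List Bool) : bX p (false :: t) = bX false t := by
  simp [bX]

lemma bX_true_cons_cons (x : Bool) (w : List Bool) :
    bX false (true :: x :: w) = 1 + bX false w := by
  cases x <;> simp [bX]

lemma rhoB_nil : rhoB [] = 1 := rfl

lemma rhoB_false_cons (w : List Bool) : rhoB (false :: w) = 1 := by
  simp [rhoB, List.takeWhile_cons]

lemma rhoB_true_cons (w : List Bool) : rhoB (true :: w) = rhoB w + 1 := by
  simp [rhoB, List.takeWhile_cons]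

lemma dmg_take : ∀ (z : List Bool) (i : ℕ),
    bX false (true :: z.take i) = bX false (z.take i) +
      (if (min (rhoB z) (i+1)) % 2 = 1 then 1 else 0)
  | [], i => by
    have h : min (rhoB ([] : List Bool)) (i+1) = 1 := by rw [rhoB_nil]; omega
    simp [h, bX]
  | a :: w, 0 => by
    have h : min (rhoB (a :: w)) 1 = 1 := by
      have : 1 ≤ rhoB (a :: w) := by cases a <;> simp [rhoB_false_cons, rhoB_true_cons]
      omega
    simp [h, bX]
  | false :: w, i + 1 => by
    have h : min (rhoB (false :: w)) (i+2) = 1 := by rw [rhoB_false_cons]; omega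
    simp only [List.take_succ_cons, bX_true_cons_cons, bX_cons_false, h]
    simp [Nat.add_comm]
  | true :: w, i + 1 => by
    have ih := dmg_take w i
    simp only [List.take_succ_cons, bX_true_cons_cons, rhoB_true_cons]
    rw [ih]
    have hmin : min (rhoB w + 1) (i + 1 + 1) = min (rhoB w) (i+1) + 1 := by omega
    rw [hmin]
    split_ifs with h1 h2 h3 <;> omega

lemma bX_head_split (a₁ : Bool) (z : List Bool) (i : ℕ) :
    bX false (a₁ :: z.take i) = bX false (z.take i) +
      (if a₁ = true ∧ (min (rhoB z) (i+1)) % 2 = 1 then 1 else 0) := by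
  cases a₁
  · simp [bX_cons_false]
  · rw [dmg_take]
    simp

-- chain selection lemma

lemma chain_selection (l : Finset ℕ) (b : ℕ) (hb : b ≤ l.card) (K : Finset ℕ)
    (S : ℕ → Finset ℕ) (hsub : ∀ k ∈ K, S k ⊆ l)
    (hchain : ∀ k ∈ K, ∀ k' ∈ K, S k ⊆ S k' ∨ S k' ⊆ S k) :
    ∃ f, f ⊆ l ∧ f.card = b ∧ ∀ k ∈ K, min b (S k).card ≤ (f ∩ S k).card := by
  classical
  set Ksmall := K.filter (fun k => (S k).card ≤ b) with hKsmall
  set Kbig := K.filter (fun k => b < (S k).card) with hKbig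
  obtain ⟨T, hTl, hTb, hTsmall, hTform⟩ :
      ∃ T, T ⊆ l ∧ T.card ≤ b ∧ (∀ k ∈ Ksmall, S k ⊆ T) ∧
        (T = ∅ ∨ ∃ k₀ ∈ K, T = S k₀) := by
    by_cases hKs : Ksmall.Nonempty
    · obtain ⟨k₀, hk₀, hmax⟩ := Finset.exists_max_image Ksmall (fun k => (S k).card) hKs
      have hk₀K : k₀ ∈ K := (Finset.mem_filter.mp hk₀).1
      refine ⟨S k₀, hsub _ hk₀K, (Finset.mem_filter.mp hk₀).2, ?_, Or.inr ⟨k₀, hk₀K, rfl⟩⟩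
      intro k hk
      have hkK : k ∈ K := (Finset.mem_filter.mp hk).1
      rcases hchain k hkK k₀ hk₀K with h | h
      · exact h
      · rw [Finset.eq_of_subset_of_card_le h (hmax k hk)]
    · exact ⟨∅, Finset.empty_subset _, by simp, fun k hk => absurd ⟨k, hk⟩ hKs, Or.inl rfl⟩
  by_cases hKb : Kbig.Nonempty
  · obtain ⟨k₁, hk₁, hmin⟩ := Finset.exists_min_image Kbig (fun k => (S k).card) hKb
    have hk₁K : k₁ ∈ K := (Finset.mem_filter.mp hk₁).1
    have hBbig : b < (S k₁).card := (Finset.mem_filter.mp hk₁).2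
    have hTB : T ⊆ S k₁ := by
      rcases hTform with rfl | ⟨k₀, hk₀K, rfl⟩
      · exact Finset.empty_subset _
      · rcases hchain k₀ hk₀K k₁ hk₁K with h | h
        · exact h
        · have := Finset.card_le_card h
          omega
    obtain ⟨f, hTf, hfB, hfcard⟩ :=
      Finset.exists_subsuperset_card_eq hTB hTb (le_of_lt hBbig)
    refine ⟨f, hfB.trans (hsub _ hk₁K), hfcard, ?_⟩
    intro k hk
    by_cases hsk : (S k).card ≤ b
    · have hkKs : k ∈ Ksmall := Finset.mem_filter.mpr ⟨hk, hsk⟩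
      have hSk : S k ⊆ f := (hTsmall k hkKs).trans hTf
      rw [Finset.inter_eq_right.mpr hSk]
      exact min_le_right _ _
    · have hkKb : k ∈ Kbig := Finset.mem_filter.mpr ⟨hk, by omega⟩
      have hBk : S k₁ ⊆ S k := by
        rcases hchain k₁ hk₁K k hk with h | h
        · exact h
        · rw [Finset.eq_of_subset_of_card_le h (hmin k hkKb)]
      have hfk : f ⊆ S k := hfB.trans hBk
      rw [Finset.inter_eq_left.mpr hfk, hfcard]
      exact min_le_left _ _
  · obtain ⟨f, hTf, hfl, hfcard⟩ := Finset.exists_subsuperset_card_eq hTl hTb hb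
    refine ⟨f, hfl, hfcard, ?_⟩
    intro k hk
    have hkKs : k ∈ Ksmall := by
      rw [hKsmall, Finset.mem_filter]
      refine ⟨hk, ?_⟩
      by_contra h
      exact hKb ⟨k, Finset.mem_filter.mpr ⟨hk, by omega⟩⟩
    have hSk : S k ⊆ f := (hTsmall k hkKs).trans hTf
    rw [Finset.inter_eq_right.mpr hSk]
    exact min_le_right _ _

example (r r' k k' : ℕ) (h1 : min r k % 2 = 1) (h2 : ¬ min r k' % 2 = 1)
    (h3 : min r' k' % 2 = 1) (h4 : ¬ min r' k % 2 = 1) : False := by omega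

lemma bX_ge_uses : ∀ (as : List Bool) (u : ℕ → Bool) (px pu : Bool),
    (∀ i, i < as.length → u i = true → as.getD i false = true) →
    (∀ i, i + 1 < as.length → ¬(u i = true ∧ u (i+1) = true)) →
    (pu = true → 0 < as.length → u 0 = false) →
    (∑ i ∈ Finset.range as.length, if u i = true then 1 else 0) ≤
      bX px as + (if px = true ∧ pu = false then 1 else 0)
  | [], u, px, pu, _, _, _ => by simp
  | a :: t, u, px, pu, h1, h2, h3 => by
    have ih := bX_ge_uses t (fun i => u (i+1)) (a && !px) (u 0)
      (fun i hi hu => by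
        have := h1 (i+1) (by simpa using Nat.succ_lt_succ hi) hu
        simpa using this)
      (fun i hi => h2 (i+1) (by simpa using Nat.succ_lt_succ hi))
      (fun hu0 hlen => by
        have := h2 0 (by simpa using Nat.succ_lt_succ hlen)
        by_contra hne
        exact this ⟨hu0, by simpa using hne⟩)
    rw [List.length_cons, Finset.sum_range_succ']
    simp only [bX]
    by_cases hu0 : u 0 = true
    · have ha : a = true := h1 0 (Nat.succ_pos _) hu0
      have hpu : pu = false := by
        by_contra hne
        have : pu = true := by simpa using hne
        have := h3 this (Nat.succ_pos _)
        rw [hu0] at this; exact absurd this (by simp)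
      subst ha hpu
      rw [hu0] at ih ⊢
      cases px <;> simp_all <;> omega
    · have hu0' : u 0 = false := by simpa using hu0
      rw [hu0'] at ih ⊢
      cases px <;> cases pu <;> cases a <;> simp_all <;> omega

lemma subset_foldr_union (ls : List (Finset ℕ)) : ∀ l ∈ ls, l ⊆ ls.foldr (· ∪ ·) ∅ := by
  induction ls with
  | nil => simp
  | cons x t ih =>
    intro l hl
    rcases List.mem_cons.mp hl with h | h
    · subst h; exact Finset.subset_union_left
    · exact (ih l h).trans Finset.subset_union_right

lemma colorable_SL_ge (b : ℕ) (ls : List (Finset ℕ)) (h : PathListColorable b ls) :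
    b * ls.length ≤ SL ls := by
  obtain ⟨f, hf, hdisj⟩ := h
  set U := ls.foldr (· ∪ ·) ∅ with hU
  have hsub : ∀ l ∈ ls, l ⊆ U := subset_foldr_union ls
  have hfi : ∀ i, i < ls.length → f i ⊆ U := by
    intro i hi
    refine ((hf i hi).1.trans (hsub _ ?_))
    rw [List.getD_eq_getElem?_getD, List.getElem?_eq_getElem hi]
    exact List.getElem_mem _
  have key : b * ls.length = ∑ c ∈ U, ∑ i ∈ Finset.range ls.length, if c ∈ f i then 1 else 0 := by
    rw [Finset.sum_comm]
    have : ∀ i ∈ Finset.range ls.length, (∑ c ∈ U, if c ∈ f i then 1 else 0) = b := by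
      intro i hi
      rw [← card_eq_sum_ind U (f i) (hfi i (Finset.mem_range.mp hi))]
      exact (hf i (Finset.mem_range.mp hi)).2
    rw [Finset.sum_congr rfl this, Finset.sum_const, Finset.card_range]
    ring
  rw [key, SL_eq_sum U ls hsub]
  apply Finset.sum_le_sum
  intro c _
  have := bX_ge_uses (ls.map fun l => decide (c ∈ l)) (fun i => decide (c ∈ f i)) false false
    (fun i hi hu => by
      rw [List.length_map] at hi
      rw [List.getD_eq_getElem?_getD, List.getElem?_eq_getElem (by simpa using hi)]
      simp only [List.getElem_map, Option.getD_some]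
      have hc : c ∈ f i := of_decide_eq_true hu
      have hmem : c ∈ ls.getD i ∅ := (hf i hi).1 hc
      rw [List.getD_eq_getElem?_getD, List.getElem?_eq_getElem hi] at hmem
      simpa using hmem)
    (fun i hi hand => by
      rw [List.length_map] at hi
      have hd := hdisj i hi
      exact (Finset.disjoint_left.mp hd (of_decide_eq_true hand.1)) (of_decide_eq_true hand.2))
    (by simp)
  simp only [List.length_map] at this
  calc (∑ i ∈ Finset.range ls.length, if c ∈ f i then 1 else 0)
      = ∑ i ∈ Finset.range ls.length, if (decide (c ∈ f i)) = true then 1 else 0 := by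
        apply Finset.sum_congr rfl; intro i _; simp
    _ ≤ _ := by simpa using this

lemma SL_singleton (l : Finset ℕ) : SL [l] = l.card := by simp [SL, Xseq]

lemma key_choice (b : ℕ) (l₁ l₂ : Finset ℕ) (t : List (Finset ℕ))
    (hall : ∀ j len, j + len ≤ (l₁ :: l₂ :: t).length →
      b * len ≤ SL (((l₁ :: l₂ :: t).drop j).take len)) :
    ∃ f₁, f₁ ⊆ l₁ ∧ f₁.card = b ∧
      ∀ len, len ≤ (l₂ :: t).length → b * len ≤ SL (((l₂ \ f₁) :: t).take len) := by
  classical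
  set U := (l₁ :: l₂ :: t).foldr (· ∪ ·) ∅ with hU
  have hUsub : ∀ l ∈ (l₁ :: l₂ :: t), l ⊆ U := subset_foldr_union _
  have hl₁U : l₁ ⊆ U := hUsub _ (by simp)
  set ρ : ℕ → ℕ := fun c => rhoB ((l₂ :: t).map fun l => decide (c ∈ l)) with hρ
  set O : ℕ → Finset ℕ := fun k => l₁.filter (fun c => (min (ρ c) k) % 2 = 1) with hO
  have hb : b ≤ l₁.card := by
    have h := hall 0 1 (by simp)
    simpa [SL_singleton] using h
  have hOsubU : ∀ k, O k ⊆ U := fun k => (Finset.filter_subset _ _).trans hl₁U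
  have hsubPre : ∀ m, ∀ l ∈ (l₁ :: l₂ :: t).take m, l ⊆ U :=
    fun m l hl => hUsub l (List.mem_of_mem_take hl)
  have hsubRest : ∀ m, ∀ l ∈ (l₂ :: t).take m, l ⊆ U :=
    fun m l hl => hUsub l (List.mem_cons_of_mem _ (List.mem_of_mem_take hl))
  -- identity (a)
  have idA : ∀ len, 1 ≤ len →
      (O (len+1)).card + SL ((l₂ :: t).take len) = SL ((l₁ :: l₂ :: t).take (len+1)) := by
    intro len h1
    rw [SL_eq_sum U _ (hsubRest len), SL_eq_sum U _ (hsubPre (len+1)),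
      card_eq_sum_ind U (O (len+1)) (hOsubU _), ← Finset.sum_add_distrib]
    apply Finset.sum_congr rfl
    intro c _
    have e1 : ((l₁ :: l₂ :: t).take (len+1)).map (fun l => decide (c ∈ l)) =
        (decide (c ∈ l₁)) :: (((l₂ :: t).map fun l => decide (c ∈ l)).take len) := by
      rw [List.take_succ_cons, List.map_cons, List.map_take]
    have e2 : ((l₂ :: t).take len).map (fun l => decide (c ∈ l)) =
        ((l₂ :: t).map fun l => decide (c ∈ l)).take len := List.map_take ..
    rw [e1, e2, bX_head_split]
    have hiff : (c ∈ O (len+1)) ↔ (decide (c ∈ l₁) = true ∧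
        (min (rhoB ((l₂ :: t).map fun l => decide (c ∈ l))) (len+1)) % 2 = 1) := by
      simp only [hO, Finset.mem_filter, hρ, decide_eq_true_eq]
    rw [if_congr hiff rfl rfl]
    omega
  -- chain property
  have hchain : ∀ k k', O k ⊆ O k' ∨ O k' ⊆ O k := by
    intro k k'
    by_contra hcon
    push_neg at hcon
    obtain ⟨c, hc, hc'⟩ := Finset.not_subset.mp hcon.1
    obtain ⟨d, hd, hd'⟩ := Finset.not_subset.mp hcon.2
    simp only [hO, Finset.mem_filter] at hc hc' hd hd'
    have h1 := hc.2
    have h2 : ¬ (min (ρ c) k') % 2 = 1 := fun h => hc' ⟨hc.1, h⟩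
    have h3 := hd.2
    have h4 : ¬ (min (ρ d) k) % 2 = 1 := fun h => hd' ⟨hd.1, h⟩
    omega
  obtain ⟨f₁, hf₁l, hf₁card, hf₁sel⟩ := chain_selection l₁ b hb
    (Finset.Icc 2 (t.length + 2)) O (fun k _ => Finset.filter_subset _ _)
    (fun k _ k' _ => hchain k k')
  refine ⟨f₁, hf₁l, hf₁card, ?_⟩
  intro len hlen
  rcases Nat.eq_zero_or_pos len with rfl | hpos
  · simp [SL, Xseq]
  obtain ⟨len', rfl⟩ : ∃ l', len = l' + 1 := ⟨len - 1, by omega⟩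
  have hkK : len' + 1 + 1 ∈ Finset.Icc 2 (t.length + 2) := by
    simp only [Finset.mem_Icc]
    simp only [List.length_cons] at hlen
    omega
  -- the new-list equation
  have EqNew : SL (((l₂ \ f₁) :: t).take (len' + 1)) + f₁.card + ((O (len' + 1 + 1)) \ f₁).card
      = SL ((l₁ :: l₂ :: t).take (len' + 1 + 1)) := by
    have hsubN : ∀ l ∈ ((l₂ \ f₁) :: t).take (len' + 1), l ⊆ U := by
      intro l hl
      rcases List.mem_cons.mp (List.mem_of_mem_take hl) with rfl | h
      · exact Finset.sdiff_subset.trans (hUsub l₂ (by simp))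
      · exact hUsub l (by simp [h])
    rw [SL_eq_sum U _ hsubN, SL_eq_sum U _ (hsubPre (len' + 1 + 1)),
      card_eq_sum_ind U f₁ (hf₁l.trans hl₁U),
      card_eq_sum_ind U ((O (len' + 1 + 1)) \ f₁) ((Finset.sdiff_subset).trans (hOsubU (len' + 1 + 1))),
      ← Finset.sum_add_distrib, ← Finset.sum_add_distrib]
    apply Finset.sum_congr rfl
    intro c _
    have eL : (((l₂ \ f₁) :: t).take (len' + 1)).map (fun l => decide (c ∈ l)) =
        (decide (c ∈ l₂ \ f₁)) :: ((t.map fun l => decide (c ∈ l)).take len') := by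
      rw [List.take_succ_cons, List.map_cons, List.map_take]
    have eR : ((l₁ :: l₂ :: t).take (len' + 1 + 1)).map (fun l => decide (c ∈ l)) =
        (decide (c ∈ l₁)) :: (decide (c ∈ l₂)) :: ((t.map fun l => decide (c ∈ l)).take len') := by
      rw [List.take_succ_cons, List.take_succ_cons, List.map_cons, List.map_cons, List.map_take]
    rw [eL, eR]
    by_cases hcf : c ∈ f₁
    · have hcl₁ : c ∈ l₁ := hf₁l hcf
      have hd : decide (c ∈ l₂ \ f₁) = false := by simp [hcf]
      have hnotO : c ∉ (O (len' + 1 + 1)) \ f₁ := fun h => (Finset.mem_sdiff.mp h).2 hcf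
      rw [hd, bX_cons_false, if_pos hcf, if_neg hnotO]
      have ha₁ : decide (c ∈ l₁) = true := by simp [hcl₁]
      rw [ha₁, bX_true_cons_cons]
      omega
    · have hd : decide (c ∈ l₂ \ f₁) = decide (c ∈ l₂) := by
        by_cases h2 : c ∈ l₂ <;> simp [h2, hcf]
      rw [hd, if_neg hcf]
      have ez : (decide (c ∈ l₂)) :: ((t.map fun l => decide (c ∈ l)).take len') =
          (((l₂ :: t).map fun l => decide (c ∈ l)).take (len' + 1)) := by
        rw [List.map_cons, List.take_succ_cons]
      rw [ez, bX_head_split (decide (c ∈ l₁)) _ (len' + 1)]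
      have hiff : (c ∈ (O (len' + 1 + 1)) \ f₁) ↔ (decide (c ∈ l₁) = true ∧
          (min (rhoB ((l₂ :: t).map fun l => decide (c ∈ l))) (len' + 1 + 1)) % 2 = 1) := by
        simp only [Finset.mem_sdiff, hO, Finset.mem_filter, hρ, decide_eq_true_eq]
        constructor
        · rintro ⟨⟨h1, h2⟩, _⟩; exact ⟨h1, h2⟩
        · rintro ⟨h1, h2⟩; exact ⟨⟨h1, h2⟩, hcf⟩
      rw [if_congr hiff rfl rfl]
      omega
  -- wrap up arithmetic
  have hsplit : ((O (len' + 1 + 1)) ∩ f₁).card + ((O (len' + 1 + 1)) \ f₁).card = (O (len' + 1 + 1)).card :=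
    Finset.card_inter_add_card_sdiff _ _
  have hsel := hf₁sel (len' + 1 + 1) hkK
  rw [Finset.inter_comm] at hsel
  have hallRest : b * (len' + 1) ≤ SL ((l₂ :: t).take (len' + 1)) := by
    have h := hall 1 (len' + 1) (by simp only [List.length_cons] at hlen ⊢; omega)
    simpa using h
  have hallPre : b * (len' + 1 + 1) ≤ SL ((l₁ :: l₂ :: t).take (len' + 1 + 1)) := by
    have h := hall 0 (len' + 1 + 1) (by simp only [List.length_cons] at hlen ⊢; omega)
    simpa using h
  have hid := idA (len' + 1) (by omega)
  rw [hf₁card] at EqNew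
  rw [Nat.min_def] at hsel
  have hmul : b * (len' + 1 + 1) = b * (len' + 1) + b := Nat.mul_succ b (len' + 1)
  split_ifs at hsel <;> omega

theorem hall_colorable (b : ℕ) : ∀ (N : ℕ) (ls : List (Finset ℕ)), ls.length ≤ N →
    (∀ j len, j + len ≤ ls.length → b * len ≤ SL ((ls.drop j).take len)) →
    PathListColorable b ls := by
  intro N
  induction N with
  | zero =>
    intro ls hlen _
    have : ls = [] := List.length_eq_zero_iff.mp (Nat.le_zero.mp hlen)
    subst this
    exact ⟨fun _ => ∅, fun i hi => by simp at hi, fun i hi => by simp at hi⟩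
  | succ N ih =>
    intro ls hlen hall
    match ls with
    | [] => exact ⟨fun _ => ∅, fun i hi => by simp at hi, fun i hi => by simp at hi⟩
    | [l] =>
      have hb : b ≤ l.card := by
        have h := hall 0 1 (by simp)
        simpa [SL_singleton] using h
      obtain ⟨s, hs, hscard⟩ := Finset.exists_subset_card_eq hb
      refine ⟨fun _ => s, fun i hi => ?_, fun i hi => by simp at hi⟩
      match i with
      | 0 => exact ⟨by simpa using hs, hscard⟩
      | i + 1 => exact absurd hi (by simp)
    | l₁ :: l₂ :: t =>
      obtain ⟨f₁, hf₁l, hf₁card, hnew⟩ := key_choice b l₁ l₂ t hall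
      set ls' := (l₂ \ f₁) :: t with hls'
      have hall' : ∀ j len, j + len ≤ ls'.length → b * len ≤ SL ((ls'.drop j).take len) := by
        intro j len hjl
        match j with
        | 0 =>
          simp only [List.drop_zero]
          exact hnew len (by simpa [hls'] using hjl)
        | j + 1 =>
          have : ls'.drop (j+1) = (l₁ :: l₂ :: t).drop (j+2) := by
            simp [hls']
          rw [this]
          apply hall (j+2) len
          simp only [hls', List.length_cons] at hjl
          simp only [List.length_cons]
          omega
      have hlen' : ls'.length ≤ N := by
        simp only [hls', List.length_cons] at hlen ⊢
        omega
      obtain ⟨g, hg, hgdisj⟩ := ih ls' hlen' hall'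
      refine ⟨fun i => match i with | 0 => f₁ | (i+1) => g i, ?_, ?_⟩
      · intro i hi
        match i with
        | 0 => exact ⟨by simpa using hf₁l, hf₁card⟩
        | i + 1 =>
          have hi' : i < ls'.length := by
            simp only [List.length_cons] at hi ⊢
            simp only [hls', List.length_cons]
            omega
          have := hg i hi'
          refine ⟨?_, this.2⟩
          match i with
          | 0 =>
            exact (this.1).trans (by
              simp only [hls', List.getD_cons_zero, List.getD_cons_succ]
              exact Finset.sdiff_subset)
          | i + 1 =>
            exact (this.1).trans (by simp [hls'])
      · intro i hi
        match i with
        | 0 =>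
          have h0 : 0 < ls'.length := by simp [hls']
          have := (hg 0 h0).1
          simp only [hls', List.getD_cons_zero] at this
          have hdisj : Disjoint f₁ (g 0) := by
            rw [Finset.disjoint_left]
            intro a ha hag
            exact (Finset.mem_sdiff.mp (this hag)).2 ha
          exact hdisj
        | i + 1 =>
          apply hgdisj i
          simp only [List.length_cons] at hi
          simp only [hls', List.length_cons]
          omega

lemma pair_bound (prev x y : Finset ℕ) :
    y.card ≤ (x \ prev).card + (y \ (x \ prev)).card := by
  have := Finset.card_le_card_sdiff_add_card (s := y) (t := x \ prev)
  omega

lemma OS1 : ∀ (ls : List (Finset ℕ)) (prev : Finset ℕ) (c : ℕ),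
    (∀ i, i % 2 = 1 → i < ls.length → c ≤ (ls.getD i ∅).card) →
    c * (ls.length / 2) ≤ Sgen prev ls
  | [], _, _, _ => by simp [Sgen_nil]
  | [x], _, _, _ => by simp
  | x :: y :: t, prev, c, h => by
    have ih := OS1 t (y \ (x \ prev)) c (fun i hi hilen => by
      have := h (i + 2) (by omega) (by simp only [List.length_cons]; omega)
      simpa using this)
    have hp : c ≤ (x \ prev).card + (y \ (x \ prev)).card := by
      have hy := h 1 (by omega) (by simp only [List.length_cons]; omega)
      simp only [List.getD_cons_succ, List.getD_cons_zero] at hy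
      exact hy.trans (pair_bound prev x y)
    rw [Sgen_cons, Sgen_cons]
    have hlen : (x :: y :: t).length / 2 = t.length / 2 + 1 := by
      simp only [List.length_cons]; omega
    rw [hlen, Nat.mul_succ]
    omega

lemma OS2 : ∀ (ls : List (Finset ℕ)) (prev : Finset ℕ) (c : ℕ),
    (∀ i, i % 2 = 1 → i + 1 < ls.length → 2 * c ≤ (ls.getD i ∅).card) →
    (∀ i, i % 2 = 1 → i + 1 = ls.length → c ≤ (ls.getD i ∅).card) →
    c * (ls.length - 1) ≤ Sgen prev ls
  | [], _, _, _, _ => by simp [Sgen_nil]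
  | [x], _, _, _, _ => by simp
  | [x, y], prev, c, _, h2 => by
    have hy := h2 1 (by omega) (by simp)
    simp only [List.getD_cons_succ, List.getD_cons_zero] at hy
    have := hy.trans (pair_bound prev x y)
    rw [Sgen_cons, Sgen_cons, Sgen_nil]
    simpa using this
  | x :: y :: z :: t, prev, c, h1, h2 => by
    have ih := OS2 (z :: t) (y \ (x \ prev)) c
      (fun i hi hilen => by
        have := h1 (i + 2) (by omega) (by
          simp only [List.length_cons] at hilen ⊢; omega)
        simpa using this)
      (fun i hi hilen => by
        have := h2 (i + 2) (by omega) (by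
          simp only [List.length_cons] at hilen ⊢; omega)
        simpa using this)
    have hy := h1 1 (by omega) (by simp only [List.length_cons]; omega)
    simp only [List.getD_cons_succ, List.getD_cons_zero] at hy
    have hp := hy.trans (pair_bound prev x y)
    rw [Sgen_cons, Sgen_cons]
    simp only [List.length_cons] at ih ⊢
    have e1 : c * (t.length + 2 + 1 - 1) = c * (t.length + 1 - 1) + 2 * c := by
      simp; ring
    rw [e1]
    omega

lemma getD_mem (l : List (Finset ℕ)) (i : ℕ) (h : i < l.length) : l.getD i ∅ ∈ l := by
  rw [List.getD_eq_getElem?_getD, List.getElem?_eq_getElem h]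
  exact List.getElem_mem h

lemma getD_drop' (l : List (Finset ℕ)) (j i : ℕ) : (l.drop j).getD i ∅ = l.getD (j + i) ∅ := by
  simp [List.getD_eq_getElem?_getD, List.getElem?_drop]

lemma getD_take' (l : List (Finset ℕ)) (j i : ℕ) (h : i < j) :
    (l.take j).getD i ∅ = l.getD i ∅ := by
  simp [List.getD_eq_getElem?_getD, List.getElem?_take, h]

lemma drop_cons_getD (l : List (Finset ℕ)) (j : ℕ) (h : j < l.length) :
    l.drop j = l.getD j ∅ :: l.drop (j + 1) := by
  rw [List.getD_eq_getElem?_getD, List.getElem?_eq_getElem h]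
  exact List.drop_eq_getElem_cons h

lemma sandwich_hall (b : ℕ) (x y : Finset ℕ) (mid : List (Finset ℕ))
    (hx : b ≤ x.card) (hy : b ≤ y.card)
    (hmid : ∀ l ∈ mid, l.card = 2 * b)
    (hSL : b * (mid.length + 2) ≤ SL (x :: (mid ++ [y]))) :
    ∀ j len, j + len ≤ mid.length + 2 →
      b * len ≤ SL (((x :: (mid ++ [y])).drop j).take len) := by
  set ls := x :: (mid ++ [y]) with hls
  set n := mid.length + 2 with hn
  have hlslen : ls.length = n := by simp [hls, hn]
  have hget0 : ls.getD 0 ∅ = x := rfl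
  have hgetmid : ∀ i, 1 ≤ i → i ≤ mid.length → (ls.getD i ∅).card = 2 * b := by
    intro i h1 h2
    have : ls.getD i ∅ = mid.getD (i - 1) ∅ := by
      rw [hls]
      obtain ⟨i', rfl⟩ : ∃ i', i = i' + 1 := ⟨i - 1, by omega⟩
      rw [List.getD_cons_succ, List.getD_append _ _ _ _ (by omega)]
      simp
    rw [this]
    exact hmid _ (getD_mem mid (i-1) (by omega))
  have hgetlast : ls.getD (n - 1) ∅ = y := by
    rw [hls, hn]
    have : mid.length + 2 - 1 = mid.length + 1 := by omega
    rw [this]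
    rw [List.getD_cons_succ, List.getD_append_right _ _ _ _ (by omega)]
    simp
  have hcard_ge : ∀ i, i < n → b ≤ (ls.getD i ∅).card := by
    intro i hi
    rcases Nat.eq_zero_or_pos i with rfl | h1
    · rw [hget0]; exact hx
    rcases Nat.lt_or_ge i (n - 1) with h2 | h2
    · have := hgetmid i h1 (by omega); omega
    · have : i = n - 1 := by omega
      rw [this, hgetlast]; exact hy
  intro j len hjlen
  rcases Nat.eq_zero_or_pos len with rfl | hlenpos
  · simp
  rcases Nat.eq_zero_or_pos j with rfl | hjpos
  · -- prefix
    rcases Nat.lt_or_ge len n with hlt | hge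
    · -- proper prefix
      simp only [List.drop_zero]
      have hsubget : ∀ i, i < len → ((ls.take len).getD i ∅) = ls.getD i ∅ :=
        fun i hi => getD_take' ls len i hi
      have hsublen : (ls.take len).length = len := by
        rw [List.length_take]; omega
      rcases Nat.even_or_odd len with he | ho
      · -- even length prefix : OS1 with c = 2b
        have := OS1 (ls.take len) ∅ (2 * b) (fun i hi hilen => by
          rw [hsublen] at hilen
          rw [hsubget i hilen]
          rw [hgetmid i (by omega) (by omega)])
        rw [hsublen] at this
        rw [SL_eq_Sgen]
        have he2 : 2 * b * (len / 2) = b * len := by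
          obtain ⟨m, rfl⟩ := he
          have h2 : (m + m) / 2 = m := by omega
          rw [h2]; ring
        omega
      · -- odd length prefix
        have hdecomp : ls.take len = x :: ((mid ++ [y]).take (len - 1)) := by
          rw [hls]
          obtain ⟨len', rfl⟩ : ∃ l', len = l' + 1 := ⟨len - 1, by omega⟩
          rw [List.take_succ_cons]
          simp
        rw [hdecomp, SL_cons]
        have hrest : ∀ i, i < len - 1 → (((mid ++ [y]).take (len - 1)).getD i ∅) = ls.getD (i + 1) ∅ := by
          intro i hi
          rw [getD_take' _ _ _ hi, hls]
          rw [List.getD_cons_succ]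
        have hrlen : ((mid ++ [y]).take (len - 1)).length = len - 1 := by
          rw [List.length_take]
          simp only [List.length_append, List.length_cons, List.length_nil]
          omega
        have := OS1 ((mid ++ [y]).take (len - 1)) x (2 * b) (fun i hi hilen => by
          rw [hrlen] at hilen
          rw [hrest i hilen]
          rw [hgetmid (i + 1) (by omega) (by omega)])
        rw [hrlen] at this
        have harith : b * len ≤ x.card + 2 * b * ((len - 1) / 2) := by
          obtain ⟨m, hm⟩ := ho
          have : (len - 1) / 2 = m := by omega
          rw [this]
          have : 2 * b * m = b * (2 * m) := by ring
          rw [this]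
          have : b * len = b * (2 * m) + b := by rw [hm]; ring
          omega
        omega
    · -- full prefix
      have hlen_eq : len = n := by omega
      subst hlen_eq
      simp only [List.drop_zero]
      have : ls.take n = ls := List.take_of_length_le (by omega)
      rw [this]
      exact hSL
  · -- j ≥ 1 : starts inside
    have hjn : j < n := by omega
    have hdrop : ls.drop j = ls.getD j ∅ :: ls.drop (j + 1) :=
      drop_cons_getD ls j (by omega)
    have hdecomp : (ls.drop j).take len = ls.getD j ∅ :: ((ls.drop (j + 1)).take (len - 1)) := by
      rw [hdrop]
      obtain ⟨len', rfl⟩ : ∃ l', len = l' + 1 := ⟨len - 1, by omega⟩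
      rw [List.take_succ_cons]
      simp
    rw [hdecomp, SL_cons]
    have hrlen : ((ls.drop (j + 1)).take (len - 1)).length = len - 1 := by
      rw [List.length_take, List.length_drop]
      omega
    have hrest : ∀ i, i < len - 1 →
        (((ls.drop (j + 1)).take (len - 1)).getD i ∅) = ls.getD (j + 1 + i) ∅ := by
      intro i hi
      rw [getD_take' _ _ _ hi, getD_drop']
    rcases Nat.lt_or_ge j (n - 1) with hj2 | hj2
    · -- head is a mid entry (or j ≤ n-2)
      have hhead : (ls.getD j ∅).card = 2 * b := hgetmid j (by omega) (by omega)
      have := OS2 ((ls.drop (j + 1)).take (len - 1)) (ls.getD j ∅) b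
        (fun i hi hilen => by
          rw [hrlen] at hilen
          rw [hrest i (by omega)]
          rw [hgetmid (j + 1 + i) (by omega) (by omega)])
        (fun i hi hilen => by
          rw [hrlen] at hilen
          rw [hrest i (by omega)]
          exact hcard_ge (j + 1 + i) (by omega))
      rw [hrlen] at this
      have harith : b * len ≤ 2 * b + b * (len - 1 - 1) := by
        rcases Nat.lt_or_ge len 2 with h | h
        · have h1 : len = 1 := by omega
          subst h1
          have : b * 1 = b := by ring
          omega
        · obtain ⟨m, rfl⟩ : ∃ m, len = m + 2 := ⟨len - 2, by omega⟩
          have h2 : m + 2 - 1 - 1 = m := by omega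
          rw [h2]
          have : b * (m + 2) = 2 * b + b * m := by ring
          omega
      omega
    · -- j = n - 1, so len = 1
      have hj3 : j = n - 1 := by omega
      have hlen1 : len = 1 := by omega
      subst hlen1
      simp only [show (1:ℕ) - 1 = 0 from rfl, List.take_zero, Sgen_nil, hj3, hgetlast]
      omega

lemma delEnds_single (p q x) : delEnds p q [x] = [(x \ p) \ q] := by
  simp [delEnds]

lemma delEnds_sandwich (p q x y : Finset ℕ) (mid : List (Finset ℕ)) :
    delEnds p q (x :: (mid ++ [y])) = (x \ p) :: (mid ++ [y \ q]) := by
  simp [delEnds, List.reverse_append]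

lemma range_two_ends (k : ℕ) :
    List.range (k + 2) = 0 :: (((List.range k).map (· + 1)) ++ [k + 1]) := by
  rw [List.range_succ, List.range_succ_eq_map]
  simp [Nat.succ_eq_add_one]

lemma map_range_decomp (L' : ℕ → Finset ℕ) (k : ℕ) :
    (List.range (k + 2)).map L' =
      L' 0 :: (((List.range k).map (fun a => L' (a + 1))) ++ [L' (k + 1)]) := by
  rw [range_two_ends]
  simp [List.map_map, Function.comp]

lemma getD_map_range (f : ℕ → Finset ℕ) (k i : ℕ) (h : i < k) :
    ((List.range k).map f).getD i ∅ = f i := by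
  rw [List.getD_eq_getElem?_getD, List.getElem?_map, List.getElem?_range h]
  rfl

lemma length_delEnds (p q : Finset ℕ) (ls : List (Finset ℕ)) :
    (delEnds p q ls).length = ls.length := by
  simp [delEnds]

lemma delEnds_decomp (L' : ℕ → Finset ℕ) (p q : Finset ℕ) (k : ℕ) :
    delEnds p q ((List.range (k + 2)).map L') =
      (L' 0 \ p) :: (((List.range k).map (fun a => L' (a + 1))) ++ [L' (k + 1) \ q]) := by
  rw [map_range_decomp, delEnds_sandwich]

lemma getD_delEnds_zero_one (L' : ℕ → Finset ℕ) (p q : Finset ℕ) :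
    (delEnds p q ((List.range 1).map L')).getD 0 ∅ = (L' 0 \ p) \ q := by
  have : (List.range 1).map L' = [L' 0] := by rw [show List.range 1 = [0] from rfl]; rfl
  rw [this, delEnds_single]
  rfl

lemma getD_delEnds_zero (L' : ℕ → Finset ℕ) (p q : Finset ℕ) (nn : ℕ) (h : 2 ≤ nn) :
    (delEnds p q ((List.range nn).map L')).getD 0 ∅ = L' 0 \ p := by
  obtain ⟨k, rfl⟩ : ∃ k, nn = k + 2 := ⟨nn - 2, by omega⟩
  rw [delEnds_decomp]
  rfl

lemma getD_delEnds_mid (L' : ℕ → Finset ℕ) (p q : Finset ℕ) (nn a : ℕ)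
    (h0 : 0 < a) (h1 : a < nn - 1) :
    (delEnds p q ((List.range nn).map L')).getD a ∅ = L' a := by
  obtain ⟨k, rfl⟩ : ∃ k, nn = k + 2 := ⟨nn - 2, by omega⟩
  obtain ⟨a', rfl⟩ : ∃ a', a = a' + 1 := ⟨a - 1, by omega⟩
  rw [delEnds_decomp, List.getD_cons_succ,
    List.getD_append _ _ _ _ (by simp; omega), getD_map_range _ _ _ (by omega)]

lemma getD_delEnds_last (L' : ℕ → Finset ℕ) (p q : Finset ℕ) (nn : ℕ) (h : 2 ≤ nn) :
    (delEnds p q ((List.range nn).map L')).getD (nn - 1) ∅ = L' (nn - 1) \ q := by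
  obtain ⟨k, rfl⟩ : ∃ k, nn = k + 2 := ⟨nn - 2, by omega⟩
  have e : k + 2 - 1 = k + 1 := by omega
  rw [delEnds_decomp, e, List.getD_cons_succ,
    List.getD_append_right _ _ _ _ (by simp), ]
  simp

lemma path_extension (m : ℕ) (nn : ℕ) (hodd : Odd nn) (L' : ℕ → Finset ℕ) (p q : Finset ℕ)
    (hcard : ∀ a, a < nn → (L' a).card = 4 * m)
    (hp : (L' 0 ∩ p).card ≤ 2 * m)
    (hq : (L' (nn - 1) ∩ q).card ≤ 2 * m)
    (hSL : 2 * m * nn ≤ SL (delEnds p q ((List.range nn).map L'))) :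
    PathListColorable (2 * m) (delEnds p q ((List.range nn).map L')) := by
  have hpos : 0 < nn := hodd.pos
  have hends : ∀ r s, (L' r ∩ s).card ≤ 2 * m → r < nn → 2 * m ≤ (L' r \ s).card := by
    intro r s hrs hr
    have h1 := Finset.card_sdiff_add_card_inter (L' r) s
    have h2 := hcard r hr
    omega
  rcases Nat.lt_or_ge nn 2 with h2 | h2
  · -- nn = 1
    have h1 : nn = 1 := by omega
    subst h1
    apply hall_colorable (2 * m) 1 _ (by rw [length_delEnds]; simp)
    intro j len hjl
    rw [length_delEnds, List.length_map, List.length_range] at hjl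
    match j, len, hjl with
    | 0, 0, _ => simp
    | 1, 0, _ => simp
    | 1, len + 1, h => omega
    | j + 2, len, h => omega
    | 0, 1, _ =>
      simp only [List.drop_zero]
      have hlen1 : (delEnds p q ((List.range 1).map L')).length = 1 := by
        rw [length_delEnds]; simp
      have : (delEnds p q ((List.range 1).map L')).take 1 =
          delEnds p q ((List.range 1).map L') := List.take_of_length_le (by omega)
      rw [this]
      calc 2 * m * 1 = 2 * m * 1 := rfl
        _ ≤ _ := hSL
  · -- nn ≥ 2
    obtain ⟨k, rfl⟩ : ∃ k, nn = k + 2 := ⟨nn - 2, by omega⟩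
    rw [delEnds_decomp]
    set mid := (List.range k).map (fun a => L' (a + 1)) with hmid
    have hmidlen : mid.length = k := by simp [hmid]
    have hhall := sandwich_hall (2 * m) (L' 0 \ p) (L' (k + 1) \ q) mid
      (hends 0 p hp (by omega))
      (by
        have := hends (k + 2 - 1) q hq (by omega)
        simpa using this)
      (by
        intro l hl
        rw [hmid] at hl
        obtain ⟨a, ha, rfl⟩ := List.mem_map.mp hl
        rw [List.mem_range] at ha
        have : (2 : ℕ) * (2 * m) = 4 * m := by ring
        rw [this]
        exact hcard (a + 1) (by omega))
      (by
        rw [hmidlen]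
        rw [delEnds_decomp] at hSL
        exact hSL)
    apply hall_colorable (2 * m) ((L' 0 \ p) :: (mid ++ [L' (k + 1) \ q])).length _ le_rfl
    intro j len hjl
    apply hhall
    simp only [List.length_cons, List.length_append, List.length_nil, hmidlen] at hjl ⊢
    omega

lemma getD_delEnds_subsetL (L' : ℕ → Finset ℕ) (p q : Finset ℕ) (nn a : ℕ) (ha : a < nn) :
    (delEnds p q ((List.range nn).map L')).getD a ∅ ⊆ L' a := by
  rcases Nat.lt_or_ge nn 2 with h2 | h2
  · have h1 : nn = 1 := by omega
    subst h1
    have ha0 : a = 0 := by omega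
    subst ha0
    rw [getD_delEnds_zero_one]
    exact (Finset.sdiff_subset).trans Finset.sdiff_subset
  · by_cases ha0 : a = 0
    · subst ha0
      rw [getD_delEnds_zero _ _ _ _ h2]
      exact Finset.sdiff_subset
    · by_cases hal : a = nn - 1
      · subst hal
        rw [getD_delEnds_last _ _ _ _ h2]
        exact Finset.sdiff_subset
      · rw [getD_delEnds_mid _ _ _ _ _ (by omega) (by omega)]

lemma getD_delEnds_disj_p (L' : ℕ → Finset ℕ) (p q : Finset ℕ) (nn : ℕ) (hpos : 0 < nn) :
    Disjoint ((delEnds p q ((List.range nn).map L')).getD 0 ∅) p := by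
  rcases Nat.lt_or_ge nn 2 with h2 | h2
  · have h1 : nn = 1 := by omega
    subst h1
    rw [getD_delEnds_zero_one]
    exact Finset.disjoint_of_subset_left Finset.sdiff_subset Finset.sdiff_disjoint
  · rw [getD_delEnds_zero _ _ _ _ h2]
    exact Finset.sdiff_disjoint

lemma getD_delEnds_disj_q (L' : ℕ → Finset ℕ) (p q : Finset ℕ) (nn : ℕ) (hpos : 0 < nn) :
    Disjoint ((delEnds p q ((List.range nn).map L')).getD (nn - 1) ∅) q := by
  rcases Nat.lt_or_ge nn 2 with h2 | h2
  · have h1 : nn = 1 := by omega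
    subst h1
    rw [getD_delEnds_zero_one]
    exact Finset.sdiff_disjoint
  · rw [getD_delEnds_last _ _ _ _ h2]
    exact Finset.sdiff_disjoint

lemma phi_subset_phiNX {V : Type*} (G : SimpleGraph V) (X : Finset V)
    (φ : V → Finset ℕ) (w x : V) (hx : x ∈ X) (hadj : G.Adj w x) :
    φ x ⊆ phiNX G X φ w := by
  classical
  apply Finset.subset_biUnion_of_mem (s := X.filter fun y => G.Adj w y) φ
  simp only [Finset.mem_filter]
  exact ⟨hx, hadj⟩

/-- Lemma `lem:abstract`: let `X` be a set of vertices of `G` such that every component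
of `G − X` is a path with an odd number of vertices (the components are given by the
vertex enumerations `pa i 0, …, pa i (n i − 1)`), none of whose internal vertices has a
neighbour in `X`, and let `L` give `4m` colours to every vertex outside `X`. Then `G`
is `(L:2m)`-colourable iff `G[X]` has a `2m`-tuple `L`-colouring `φ` such that every
component path satisfies conditions (i), (ii), (iii). -/
theorem abstract_extension (m : ℕ) (hm : 0 < m)
    (V : Type) (G : SimpleGraph V) (X : Finset V)
    (ι : Type) (n : ι → ℕ) (hodd : ∀ i, Odd (n i))
    (pa : ι → ℕ → V)
    (hinj : ∀ i, ∀ a < n i, ∀ b < n i, pa i a = pa i b → a = b)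
    (hdisj : ∀ i j, i ≠ j → ∀ a < n i, ∀ b < n j, pa i a ≠ pa j b)
    (hnotX : ∀ i, ∀ a < n i, pa i a ∉ X)
    (hcover : ∀ v : V, v ∉ X → ∃ i, ∃ a < n i, pa i a = v)
    (hpathadj : ∀ i, ∀ a < n i, ∀ b < n i,
      (G.Adj (pa i a) (pa i b) ↔ a + 1 = b ∨ b + 1 = a))
    (hnoadj : ∀ i j, i ≠ j → ∀ a < n i, ∀ b < n j, ¬ G.Adj (pa i a) (pa j b))
    (hinternal : ∀ i, ∀ a, 0 < a → a + 1 < n i → ∀ x ∈ X, ¬ G.Adj (pa i a) x)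
    (L : V → Finset ℕ) (hL : ∀ v, v ∉ X → (L v).card = 4 * m) :
    ListColorable G L (2 * m) ↔
      ∃ φ : V → Finset ℕ,
        (∀ x ∈ X, φ x ⊆ L x) ∧ (∀ x ∈ X, (φ x).card = 2 * m) ∧
        (∀ x ∈ X, ∀ y ∈ X, G.Adj x y → Disjoint (φ x) (φ y)) ∧
        ∀ i : ι,
          (L (pa i 0) ∩ phiNX G X φ (pa i 0)).card ≤ 2 * m ∧
          (L (pa i (n i - 1)) ∩ phiNX G X φ (pa i (n i - 1))).card ≤ 2 * m ∧
          damZ ((List.range (n i)).map fun a => L (pa i a))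
              (phiNX G X φ (pa i 0)) (phiNX G X φ (pa i (n i - 1)))
            ≤ (SL ((List.range (n i)).map fun a => L (pa i a)) : ℤ)
              - 2 * m * n i := by
  classical
  constructor
  · rintro ⟨f, hfsub, hfcard, hfdisj⟩
    have hdisjphi : ∀ v, Disjoint (f v) (phiNX G X f v) := by
      intro v
      rw [Finset.disjoint_right]
      intro c hc
      rw [phiNX, Finset.mem_biUnion] at hc
      obtain ⟨x, hx, hcx⟩ := hc
      have hadj : G.Adj v x := (Finset.mem_filter.mp hx).2
      intro hcf
      exact (Finset.disjoint_left.mp (hfdisj hadj) hcf) hcx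
    have hend : ∀ w, w ∉ X → (L w ∩ phiNX G X f w).card ≤ 2 * m := by
      intro w hw
      have hsub2 : L w ∩ phiNX G X f w ⊆ L w \ f w := by
        intro c hc
        rw [Finset.mem_inter] at hc
        rw [Finset.mem_sdiff]
        exact ⟨hc.1, fun hcf => (Finset.disjoint_left.mp (hdisjphi w) hcf) hc.2⟩
      have hle := Finset.card_le_card hsub2
      rw [Finset.card_sdiff_of_subset (hfsub w), hfcard w, hL w hw] at hle
      omega
    refine ⟨f, fun x _ => hfsub x, fun x _ => hfcard x, fun x _ y _ h => hfdisj h, ?_⟩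
    intro i
    have hpos : 0 < n i := (hodd i).pos
    refine ⟨hend _ (hnotX i 0 hpos), hend _ (hnotX i (n i - 1) (by omega)), ?_⟩
    have hcolor : PathListColorable (2 * m)
        (delEnds (phiNX G X f (pa i 0)) (phiNX G X f (pa i (n i - 1)))
          ((List.range (n i)).map fun a => L (pa i a))) := by
      refine ⟨fun a => f (pa i a), ?_, ?_⟩
      · intro a ha
        rw [length_delEnds, List.length_map, List.length_range] at ha
        refine ⟨?_, hfcard _⟩
        by_cases ha0 : a = 0
        · subst ha0
          rcases Nat.lt_or_ge (n i) 2 with h2 | h2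
          · have h1 : n i = 1 := by omega
            rw [h1, getD_delEnds_zero_one]
            intro c hc
            simp only [Finset.mem_sdiff]
            have hc0 : c ∉ phiNX G X f (pa i 0) :=
              fun hcp => (Finset.disjoint_left.mp (hdisjphi (pa i 0)) hc) hcp
            have hcq : c ∉ phiNX G X f (pa i (n i - 1)) :=
              fun hcp => (Finset.disjoint_left.mp (hdisjphi (pa i (n i - 1))) (by
                rw [h1]; simpa using hc)) hcp
            refine ⟨⟨hfsub _ hc, hc0⟩, ?_⟩
            rw [h1] at hcq
            simpa using hcq
          · rw [getD_delEnds_zero _ _ _ _ h2]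
            intro c hc
            rw [Finset.mem_sdiff]
            exact ⟨hfsub _ hc,
              fun hcp => (Finset.disjoint_left.mp (hdisjphi (pa i 0)) hc) hcp⟩
        · by_cases hal : a = n i - 1
          · subst hal
            have h2 : 2 ≤ n i := by omega
            rw [getD_delEnds_last _ _ _ _ h2]
            intro c hc
            rw [Finset.mem_sdiff]
            exact ⟨hfsub _ hc,
              fun hcp => (Finset.disjoint_left.mp (hdisjphi (pa i (n i - 1))) hc) hcp⟩
          · rw [getD_delEnds_mid _ _ _ _ _ (by omega) (by omega)]
            exact hfsub _
      · intro a ha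
        rw [length_delEnds, List.length_map, List.length_range] at ha
        exact hfdisj ((hpathadj i a (by omega) (a + 1) (by omega)).mpr (Or.inl rfl))
    have hSLb := colorable_SL_ge _ _ hcolor
    rw [length_delEnds, List.length_map, List.length_range] at hSLb
    rw [damZ]
    have hz : (2 * m * n i : ℤ) ≤
        (SL (delEnds (phiNX G X f (pa i 0)) (phiNX G X f (pa i (n i - 1)))
          ((List.range (n i)).map fun a => L (pa i a))) : ℤ) := by
      exact_mod_cast hSLb
    linarith
  · rintro ⟨φ, hφsub, hφcard, hφdisj, hcond⟩
    have hpath : ∀ i : ι, PathListColorable (2 * m)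
        (delEnds (phiNX G X φ (pa i 0)) (phiNX G X φ (pa i (n i - 1)))
          ((List.range (n i)).map fun a => L (pa i a))) := by
      intro i
      obtain ⟨h1, h2, h3⟩ := hcond i
      apply path_extension m (n i) (hodd i)
      · intro a ha; exact hL _ (hnotX i a ha)
      · exact h1
      · exact h2
      · rw [damZ] at h3
        have : (2 * m * n i : ℤ) ≤
            (SL (delEnds (phiNX G X φ (pa i 0)) (phiNX G X φ (pa i (n i - 1)))
              ((List.range (n i)).map fun a => L (pa i a))) : ℤ) := by linarith
        exact_mod_cast this
    simp only [PathListColorable] at hpath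
    choose g hg1 hg2 using hpath
    have hdellen : ∀ i : ι,
        (delEnds (phiNX G X φ (pa i 0)) (phiNX G X φ (pa i (n i - 1)))
          ((List.range (n i)).map fun a => L (pa i a))).length = n i := by
      intro i
      rw [length_delEnds, List.length_map, List.length_range]
    have hIdx : ∀ v : V, v ∉ X → ∃ i a, a < n i ∧ pa i a = v := by
      intro v hv
      obtain ⟨i, a, ha, he⟩ := hcover v hv
      exact ⟨i, a, ha, he⟩
    set F : V → Finset ℕ := fun v =>
      if hv : v ∈ X then φ v
      else g (hIdx v hv).choose (hIdx v hv).choose_spec.choose with hF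
    have hFX : ∀ v, v ∈ X → F v = φ v := by
      intro v hv
      simp only [hF, dif_pos hv]
    have hFval : ∀ (i : ι) (a : ℕ), a < n i → F (pa i a) = g i a := by
      intro i a ha
      have hv : pa i a ∉ X := hnotX i a ha
      simp only [hF, dif_neg hv]
      obtain ⟨ha', he'⟩ := (hIdx (pa i a) hv).choose_spec.choose_spec
      have key : ∀ (i' : ι) (a' : ℕ), a' < n i' → pa i' a' = pa i a → g i' a' = g i a := by
        intro i' a' ha'' he''
        have hii : i' = i := by
          by_contra hne
          exact hdisj i' i hne a' ha'' a ha he''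
        subst hii
        have haa : a' = a := hinj i' a' ha'' a ha he''
        rw [haa]
      exact key _ _ ha' he'
    -- basic g properties
    have hgprop : ∀ (i : ι) (a : ℕ), a < n i →
        g i a ⊆ (delEnds (phiNX G X φ (pa i 0)) (phiNX G X φ (pa i (n i - 1)))
          ((List.range (n i)).map fun b => L (pa i b))).getD a ∅ ∧ (g i a).card = 2 * m := by
      intro i a ha
      exact hg1 i a (by rw [hdellen i]; exact ha)
    refine ⟨F, ?_, ?_, ?_⟩
    · -- subset of L
      intro v
      by_cases hv : v ∈ X
      · rw [hFX v hv]; exact hφsub v hv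
      · obtain ⟨i, a, ha, rfl⟩ := hIdx v hv
        rw [hFval i a ha]
        exact (hgprop i a ha).1.trans (getD_delEnds_subsetL _ _ _ _ _ ha)
    · -- cards
      intro v
      by_cases hv : v ∈ X
      · rw [hFX v hv]; exact hφcard v hv
      · obtain ⟨i, a, ha, rfl⟩ := hIdx v hv
        rw [hFval i a ha]
        exact (hgprop i a ha).2
    · -- adjacency
      have hmix : ∀ u v, G.Adj u v → u ∈ X → v ∉ X → Disjoint (F u) (F v) := by
        intro u v hadj hu hv
        obtain ⟨i, a, ha, rfl⟩ := hIdx v hv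
        rw [hFX u hu, hFval i a ha]
        by_cases ha0 : a = 0
        · subst ha0
          have hφp : φ u ⊆ phiNX G X φ (pa i 0) :=
            phi_subset_phiNX G X φ (pa i 0) u hu hadj.symm
          have hgd : Disjoint (g i 0) (phiNX G X φ (pa i 0)) :=
            Finset.disjoint_of_subset_left (hgprop i 0 ha).1
              (getD_delEnds_disj_p _ _ _ _ (by omega))
          exact (Finset.disjoint_of_subset_right hφp hgd).symm
        · by_cases hal : a = n i - 1
          · subst hal
            have hφq : φ u ⊆ phiNX G X φ (pa i (n i - 1)) :=
              phi_subset_phiNX G X φ (pa i (n i - 1)) u hu hadj.symm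
            have hgd : Disjoint (g i (n i - 1)) (phiNX G X φ (pa i (n i - 1))) :=
              Finset.disjoint_of_subset_left (hgprop i (n i - 1) ha).1
                (getD_delEnds_disj_q _ _ _ _ (by omega))
            exact (Finset.disjoint_of_subset_right hφq hgd).symm
          · exact absurd hadj.symm (hinternal i a (by omega) (by omega) u hu)
      intro u v hadj
      by_cases hu : u ∈ X <;> by_cases hv : v ∈ X
      · rw [hFX u hu, hFX v hv]
        exact hφdisj u hu v hv hadj
      · exact hmix u v hadj hu hv
      · exact (hmix v u hadj.symm hv hu).symm
      · obtain ⟨i, a, ha, rfl⟩ := hIdx u hu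
        obtain ⟨j, bb, hb, rfl⟩ := hIdx v hv
        have hij : i = j := by
          by_contra hne
          exact hnoadj i j hne a ha bb hb hadj
        subst hij
        rw [hFval i a ha, hFval i bb hb]
        rcases (hpathadj i a ha bb hb).mp hadj with h | h
        · subst h
          exact hg2 i a (by rw [hdellen i]; omega)
        · subst h
          exact (hg2 i bb (by rw [hdellen i]; omega)).symm
end

section
/- Let m be a positive integer and let L be a list assignment on a path P with an odd number n of vertices v_1, …, v_n such that |L(v_i)| = 4m for all i. Then S_L(P) = 2nm − 2m + Σ_{k even, k < n} |X_{k−1} \ L(v_k)| + |X_n|. -/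
theorem SL_aux (m : ℕ) :
    ∀ (ls : List (Finset ℕ)) (prev : Finset ℕ), Odd ls.length →
    (∀ i, i < ls.length → (ls.getD i ∅).card = 4 * m) →
    ((Xseq prev ls).map Finset.card).sum = 2 * ls.length * m - 2 * m +
      (∑ j ∈ Finset.range ((ls.length - 1) / 2),
        ((Xseq prev ls).getD (2 * j) ∅ \ ls.getD (2 * j + 1) ∅).card) +
      ((Xseq prev ls).getD (ls.length - 1) ∅).card
  | [], _, hodd, _ => by simp at hodd
  | [c], prev, hodd, hcard => by
    simp [Xseq]
  | a :: b :: rest, prev, hodd, hcard => by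
    set X1 := a \ prev with hX1
    set X2 := b \ X1 with hX2
    have hXseq : Xseq prev (a :: b :: rest) = X1 :: X2 :: Xseq X2 rest := rfl
    have hoddr : Odd rest.length := by
      rw [Nat.odd_iff] at hodd ⊢
      simp only [List.length_cons] at hodd
      omega
    have IH := SL_aux m rest X2 hoddr (fun i hi => hcard (i + 2) (by simp; omega))
    -- key card identity
    have hb : b.card = 4 * m := hcard 1 (by simp)
    have hkey : X1.card + X2.card = 4 * m + (X1 \ b).card := by
      have h1 := Finset.card_sdiff_add_card_inter b X1
      have h2 := Finset.card_inter_add_card_sdiff X1 b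
      have h3 : (b ∩ X1).card = (X1 ∩ b).card := by rw [Finset.inter_comm]
      rw [hX2]
      omega
    have hshift : ∀ j, ((Xseq prev (a :: b :: rest)).getD (2 * (j + 1)) ∅ \
        (a :: b :: rest).getD (2 * (j + 1) + 1) ∅).card =
        ((Xseq X2 rest).getD (2 * j) ∅ \ rest.getD (2 * j + 1) ∅).card := by
      intro j
      have h2 : 2 * (j + 1) = (2 * j) + 1 + 1 := by ring
      rw [h2, hXseq]
      simp [List.getD_cons_succ]
    have hsum : (∑ j ∈ Finset.range ((rest.length - 1) / 2 + 1),
        ((Xseq prev (a :: b :: rest)).getD (2 * j) ∅ \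
          (a :: b :: rest).getD (2 * j + 1) ∅).card) =
        (∑ j ∈ Finset.range ((rest.length - 1) / 2),
          ((Xseq X2 rest).getD (2 * j) ∅ \ rest.getD (2 * j + 1) ∅).card) +
        (X1 \ b).card := by
      rw [Finset.sum_range_succ']
      congr 1
    simp only [List.length_cons]
    have ht : (rest.length + 1 + 1 - 1) / 2 = (rest.length - 1) / 2 + 1 := by
      rw [Nat.odd_iff] at hoddr; omega
    have hlast : rest.length + 1 + 1 - 1 = (rest.length - 1) + 2 := by
      rw [Nat.odd_iff] at hoddr; omega
    rw [ht, hlast, hsum]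
    have hgetlast : (Xseq prev (a :: b :: rest)).getD ((rest.length - 1) + 2) ∅ =
        (Xseq X2 rest).getD (rest.length - 1) ∅ := by
      rw [hXseq]; simp [List.getD_cons_succ]
    rw [hgetlast, hXseq]
    simp only [List.map_cons, List.sum_cons]
    rw [IH]
    have hmul : 2 * (rest.length + 1 + 1) * m = 2 * rest.length * m + 4 * m := by ring
    rw [hmul]
    have h1le : 1 ≤ rest.length := by rw [Nat.odd_iff] at hoddr; omega
    have hK : 2 * m ≤ 2 * rest.length * m :=
      Nat.mul_le_mul (Nat.mul_le_mul_left 2 h1le) (le_refl m)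
    set K := 2 * rest.length * m with hKdef
    omega

/-- Lemma `lem:extra`: for a path with an odd number `n` of vertices, all of whose lists
have size `4m`, `S_L(P) = 2nm − 2m + Σ_{k even, k < n} |X_{k−1} \ L(v_k)| + |X_n|`
(the sum is over even 1-indexed `k` with `2 ≤ k < n`, i.e. `k = 2j + 2` for
`j < (n−1)/2`). -/
theorem SL_eq_extra (m : ℕ) (hm : 0 < m) (ls : List (Finset ℕ))
    (hodd : Odd ls.length)
    (hcard : ∀ i, i < ls.length → (ls.getD i ∅).card = 4 * m) :
    SL ls = 2 * ls.length * m - 2 * m +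
      (∑ j ∈ Finset.range ((ls.length - 1) / 2),
        (Xat ls (2 * j) \ ls.getD (2 * j + 1) ∅).card) +
      (Xat ls (ls.length - 1)).card := by
  simpa [SL, Xat] using SL_aux m ls ∅ hodd hcard
end

section
/- Let m be a positive integer and let L be a list assignment on a path P with an odd number n of vertices v_1, …, v_n such that |L(v_i)| = 4m for all i. Then S_L(P) ≥ 2nm + 2m. -/
private theorem sumX_aux (m : ℕ) : ∀ (ls : List (Finset ℕ)),
    (∀ s ∈ ls, 4 * m ≤ s.card) → Even ls.length → ∀ prev,
    2 * m * ls.length ≤ ((Xseq prev ls).map Finset.card).sum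
  | [], _, _, _ => by simp [Xseq]
  | [a], _, he, _ => by simp at he
  | a :: b :: rest, h, he, prev => by
    have ih := sumX_aux m rest (fun s hs => h s (by simp [hs]))
      (by simpa [Nat.even_add_one, Nat.not_even_iff_odd, Nat.odd_add_one] using he)
      (b \ (a \ prev))
    have hb : 4 * m ≤ b.card := h b (by simp)
    have key : b.card ≤ (b \ (a \ prev)).card + (a \ prev).card :=
      Finset.card_le_card_sdiff_add_card
    show 2 * m * (a :: b :: rest).length ≤
      (a \ prev).card + ((b \ (a \ prev)).card + ((Xseq (b \ (a \ prev)) rest).map Finset.card).sum)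
    have hlen : 2 * m * (a :: b :: rest).length = 2 * m * rest.length + 4 * m := by
      simp; ring
    omega

/-- Lemma `lem:trivbound`: for a path with an odd number `n` of vertices, all of whose
lists have size `4m`, `S_L(P) ≥ 2nm + 2m`. -/
theorem SL_ge_trivbound (m : ℕ) (hm : 0 < m) (ls : List (Finset ℕ))
    (hodd : Odd ls.length)
    (hcard : ∀ i, i < ls.length → (ls.getD i ∅).card = 4 * m) :
    2 * ls.length * m + 2 * m ≤ SL ls := by
  obtain ⟨a, rest, rfl⟩ : ∃ a rest, ls = a :: rest := by
    cases ls with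
    | nil => simp at hodd
    | cons a rest => exact ⟨a, rest, rfl⟩
  have ha : a.card = 4 * m := by simpa using hcard 0 (by simp)
  have hrest : ∀ s ∈ rest, 4 * m ≤ s.card := by
    intro s hs
    obtain ⟨i, hi, rfl⟩ := List.mem_iff_getElem.mp hs
    have := hcard (i + 1) (by simp; omega)
    simp [List.getD_eq_getElem?_getD, List.getElem?_eq_getElem hi] at this
    omega
  have heven : Even rest.length := by
    simpa [Nat.odd_add_one] using hodd
  have hmain := sumX_aux m rest hrest heven (a \ ∅)
  show 2 * (a :: rest).length * m + 2 * m ≤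
    (a \ ∅).card + ((Xseq (a \ ∅) rest).map Finset.card).sum
  have hsd : (a \ ∅).card = 4 * m := by simpa using ha
  have hlen : 2 * (a :: rest).length * m = 2 * m * rest.length + 2 * m := by
    simp; ring
  omega
end
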